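/- arXiv:1703.07327 — 12 statements merged into one kernel-verified Lean document; each statement's English description precedes it below -/
import Mathlib

section
/- Let (X,d) be a metric space. Then U(X) is closed under products (i.e., U(X) is a ring) if and only if every subset A ⊆ X that is not Bourbaki-bounded contains an infinite uniformly isolated subset. -/
/-- `A` is a Bourbaki-bounded subset of `X`: every uniformly continuous
real-valued function on `X` is bounded on `A`. -/
def IsBourbakiBoundedSubset {X : Type*} [MetricSpace X] (A : Set X) : Prop :=
  ∀ f : X → ℝ, UniformContinuous f → ∃ C : ℝ, ∀ x ∈ A, |f x| ≤ C

/-- `A` is uniformly isolated: there is `ε > 0` with `dist a x ≥ ε` for every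
`a ∈ A` and every `x ∈ X` with `x ≠ a`. -/
def IsUniformlyIsolated {X : Type*} [MetricSpace X] (A : Set X) : Prop :=
  ∃ ε : ℝ, 0 < ε ∧ ∀ a ∈ A, ∀ x : X, x ≠ a → ε ≤ dist a x

/-- Easy direction: if every non-Bourbaki-bounded set contains an infinite uniformly
isolated subset, then `U(X)` is closed under products. -/
theorem UX_aux_mpr {X : Type*} [MetricSpace X]
    (h : ∀ A : Set X, ¬ IsBourbakiBoundedSubset A →
      ∃ B ⊆ A, B.Infinite ∧ IsUniformlyIsolated B)
    (f g : X → ℝ) (hf : UniformContinuous f) (hg : UniformContinuous g) :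
    UniformContinuous (fun x => f x * g x) := by
  by_contra hc
  rw [Metric.uniformContinuous_iff] at hc
  push_neg at hc
  obtain ⟨ε, hε, hcc⟩ := hc
  have hcc' : ∀ n : ℕ, ∃ p : X × X, dist p.1 p.2 < 1/(n+1) ∧
      ε ≤ dist (f p.1 * g p.1) (f p.2 * g p.2) := by
    intro n
    obtain ⟨x, y, h1, h2⟩ := hcc (1/(n+1)) (by positivity)
    exact ⟨(x, y), h1, h2⟩
  choose p hp1 hp2 using hcc'
  set x : ℕ → X := fun n => (p n).1 with hxdef
  set y : ℕ → X := fun n => (p n).2 with hydef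
  set A : Set X := Set.range x with hAdef
  have hnb : ¬ IsBourbakiBoundedSubset A := by
    intro hBB
    obtain ⟨Cf, hCf⟩ := hBB f hf
    obtain ⟨Cg, hCg⟩ := hBB g hg
    have hCf0 : 0 ≤ Cf := le_trans (abs_nonneg _) (hCf (x 0) ⟨0, rfl⟩)
    have hCg0 : 0 ≤ Cg := le_trans (abs_nonneg _) (hCg (x 0) ⟨0, rfl⟩)
    obtain ⟨δ₁, hδ₁pos, hδ₁⟩ := Metric.uniformContinuous_iff.mp hf (ε/(4*(Cg+2))) (by positivity)
    obtain ⟨δ₂, hδ₂pos, hδ₂⟩ :=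
      Metric.uniformContinuous_iff.mp hg (min 1 (ε/(4*(Cf+1)))) (by positivity)
    have hmin : 0 < min δ₁ δ₂ := lt_min hδ₁pos hδ₂pos
    obtain ⟨n, hn⟩ := exists_nat_gt (1/(min δ₁ δ₂))
    have hinv : 1/((n:ℝ)+1) < min δ₁ δ₂ := by
      rw [div_lt_iff₀ (by positivity)]
      rw [div_lt_iff₀ hmin] at hn
      nlinarith [hmin]
    have hlt : dist (x n) (y n) < min δ₁ δ₂ := lt_trans (hp1 n) hinv
    have h1 := hδ₁ (lt_of_lt_of_le hlt (min_le_left _ _))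
    have h2 := hδ₂ (lt_of_lt_of_le hlt (min_le_right _ _))
    rw [Real.dist_eq] at h1 h2
    have h2a : |g (x n) - g (y n)| ≤ 1 := le_of_lt (lt_of_lt_of_le h2 (min_le_left _ _))
    have h2b : |g (x n) - g (y n)| ≤ ε/(4*(Cf+1)) :=
      le_of_lt (lt_of_lt_of_le h2 (min_le_right _ _))
    have h1b : |f (x n) - f (y n)| ≤ ε/(4*(Cg+2)) := le_of_lt h1
    have hfx : |f (x n)| ≤ Cf := hCf (x n) ⟨n, rfl⟩
    have hgx : |g (x n)| ≤ Cg := hCg (x n) ⟨n, rfl⟩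
    have hgy : |g (y n)| ≤ Cg + 1 := by
      have := abs_sub_abs_le_abs_sub (g (y n)) (g (x n))
      rw [abs_sub_comm] at this
      linarith
    have hp2' := hp2 n
    rw [Real.dist_eq] at hp2'
    have keyeq : f (x n) * g (x n) - f (y n) * g (y n) =
        f (x n) * (g (x n) - g (y n)) + g (y n) * (f (x n) - f (y n)) := by ring
    have hbound : |f (x n) * g (x n) - f (y n) * g (y n)| ≤
        |f (x n)| * |g (x n) - g (y n)| + |g (y n)| * |f (x n) - f (y n)| := by
      rw [keyeq]
      calc |f (x n) * (g (x n) - g (y n)) + g (y n) * (f (x n) - f (y n))|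
          ≤ |f (x n) * (g (x n) - g (y n))| + |g (y n) * (f (x n) - f (y n))| := abs_add_le _ _
        _ = |f (x n)| * |g (x n) - g (y n)| + |g (y n)| * |f (x n) - f (y n)| := by
            rw [abs_mul, abs_mul]
    have t1 : |f (x n)| * |g (x n) - g (y n)| ≤ (Cf + 1) * (ε/(4*(Cf+1))) :=
      mul_le_mul (by linarith) h2b (abs_nonneg _) (by linarith)
    have t2 : |g (y n)| * |f (x n) - f (y n)| ≤ (Cg + 2) * (ε/(4*(Cg+2))) :=
      mul_le_mul (by linarith) h1b (abs_nonneg _) (by linarith)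
    have e1 : (Cf + 1) * (ε/(4*(Cf+1))) = ε/4 := by
      field_simp
    have e2 : (Cg + 2) * (ε/(4*(Cg+2))) = ε/4 := by
      field_simp
    rw [e1] at t1
    rw [e2] at t2
    linarith
  obtain ⟨B, hBA, hBinf, ε₀, hε₀pos, hiso⟩ := h A hnb
  obtain ⟨N, hN⟩ := exists_nat_gt (1/ε₀)
  have hF : (x '' {m | m < N}).Finite := (Set.finite_lt_nat N).image x
  obtain ⟨c, hcB, hcF⟩ := (hBinf.diff hF).nonempty
  obtain ⟨m, hm⟩ := hBA hcB
  have hmN : N ≤ m := by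
    by_contra hcon
    exact hcF ⟨m, not_le.mp hcon, hm⟩
  have hne : y m ≠ x m := by
    intro he
    have h0 : ε ≤ dist (f (x m) * g (x m)) (f (y m) * g (y m)) := hp2 m
    rw [he, dist_self] at h0
    linarith
  have hiso' := hiso c hcB (y m) (by rw [← hm]; exact hne)
  rw [← hm] at hiso'
  have hinv : 1/((m:ℝ)+1) < ε₀ := by
    rw [div_lt_iff₀ (by positivity)]
    rw [div_lt_iff₀ hε₀pos] at hN
    have hmN' : (N:ℝ) ≤ m := by exact_mod_cast hmN
    nlinarith
  have := hp1 m
  linarith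

/-- `U(X)` is a ring (closed under products) iff every non-Bourbaki-bounded
subset of `X` contains an infinite uniformly isolated subset. -/
theorem UX_ring_iff {X : Type*} [MetricSpace X] :
    (∀ f g : X → ℝ, UniformContinuous f → UniformContinuous g →
      UniformContinuous (fun x => f x * g x)) ↔
    (∀ A : Set X, ¬ IsBourbakiBoundedSubset A →
      ∃ B ⊆ A, B.Infinite ∧ IsUniformlyIsolated B) := by
  constructor
  · intro hring A hA
    by_contra hno
    push_neg at hno
    have hfin : ∀ B : Set X, B ⊆ A → IsUniformlyIsolated B → B.Finite := by
      intro B hBA hiso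
      by_contra hBf
      exact hno B hBA hBf hiso
    unfold IsBourbakiBoundedSubset at hA
    push_neg at hA
    obtain ⟨f0, hf0, hunb⟩ := hA
    set f : X → ℝ := fun x => |f0 x| with hfdef
    have hf : UniformContinuous f := Real.uniformContinuous_abs.comp hf0
    have hunb' : ∀ C : ℝ, ∃ x ∈ A, C < f x := hunb
    obtain ⟨δ, hδpos, hδ⟩ := Metric.uniformContinuous_iff.mp hf 1 one_pos
    -- key selection lemma
    have key : ∀ n : ℕ, ∀ M : ℝ, ∃ q : X × X,
        q.1 ∈ A ∧ q.2 ≠ q.1 ∧ dist q.1 q.2 < min (1/((n:ℝ)+1)) (δ/8) ∧ M < f q.1 := by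
      intro n M
      have hεpos : 0 < min (1/((n:ℝ)+1)) (δ/8) := lt_min (by positivity) (by linarith)
      set ε := min (1/((n:ℝ)+1)) (δ/8) with hεdef
      set I : Set X := {z | z ∈ A ∧ ∀ w : X, w ≠ z → ε ≤ dist z w} with hIdef
      have hIiso : IsUniformlyIsolated I := ⟨ε, hεpos, fun z hz w hw => hz.2 w hw⟩
      have hIfin : I.Finite := hfin I (fun z hz => hz.1) hIiso
      obtain ⟨C, hC⟩ := (hIfin.image f).bddAbove
      obtain ⟨q, hqA, hq⟩ := hunb' (max M C)
      have hqI : q ∉ I := by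
        intro hqmem
        have h5 : f q ≤ C := hC (Set.mem_image_of_mem f hqmem)
        linarith [lt_of_le_of_lt (le_max_right M C) hq]
      have : ∃ w : X, w ≠ q ∧ dist q w < ε := by
        by_contra hcon
        push_neg at hcon
        exact hqI ⟨hqA, fun w hw => hcon w hw⟩
      obtain ⟨w, hw, hwd⟩ := this
      exact ⟨(q, w), hqA, hw, hwd, lt_of_le_of_lt (le_max_left M C) hq⟩
    choose pick h1 h2 h3 h4 using key
    set seq : ℕ → X × X := fun n =>
      Nat.rec (pick 0 2) (fun m ih => pick (m+1) (f ih.1 + 2)) n with hseqdef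
    set a : ℕ → X := fun n => (seq n).1 with hadef
    set b : ℕ → X := fun n => (seq n).2 with hbdef
    set t : ℕ → ℝ := fun n => f (a n) with htdef
    have hbne : ∀ n, b n ≠ a n := by
      intro n
      cases n with
      | zero => exact h2 0 2
      | succ m => exact h2 (m+1) _
    have hdista : ∀ n, dist (a n) (b n) < min (1/((n:ℝ)+1)) (δ/8) := by
      intro n
      cases n with
      | zero => exact h3 0 2
      | succ m => exact h3 (m+1) _
    have ht0 : 2 < t 0 := h4 0 2
    have htS : ∀ n, t n + 2 < t (n+1) := fun n => h4 (n+1) (f (a n) + 2)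
    have ht2 : ∀ n, 2 < t n := by
      intro n
      induction n with
      | zero => exact ht0
      | succ m ih => linarith [htS m]
    have htpos : ∀ n, 0 < t n := fun n => by linarith [ht2 n]
    have htlin : ∀ n : ℕ, 2*(n:ℝ) + 2 ≤ t n := by
      intro n
      induction n with
      | zero => simpa using ht0.le
      | succ m ih =>
        have := htS m
        push_cast
        push_cast at ih
        linarith
    have htlt : ∀ m n, m < n → t m + 2 < t n := by
      intro m n hmn
      induction n with
      | zero => exact absurd hmn (Nat.not_lt_zero m)
      | succ k ih =>
        rcases Nat.lt_succ_iff_lt_or_eq.mp hmn with h | h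
        · linarith [ih h, htS k]
        · subst h; exact htS m
    have hsep : ∀ m n, m ≠ n → δ ≤ dist (a m) (a n) := by
      have main : ∀ m n, m < n → δ ≤ dist (a m) (a n) := by
        intro m n hmn
        by_contra hcon
        have h5 := hδ (not_le.mp hcon)
        rw [Real.dist_eq, abs_sub_lt_iff] at h5
        have h6 := htlt m n hmn
        linarith [h5.1, h5.2]
      intro m n hmn
      rcases Nat.lt_or_ge m n with h | h
      · exact main m n h
      · rcases Nat.lt_or_ge n m with h' | h'
        · rw [dist_comm]; exact main n m h'
        · omega
    set d : ℕ → ℝ := fun n => dist (a n) (b n) with hddef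
    have hd0 : ∀ n, 0 < d n := fun n => dist_pos.mpr (hbne n).symm
    have hdδ : ∀ n, d n < δ/8 := fun n => lt_of_lt_of_le (hdista n) (min_le_right _ _)
    have hd1 : ∀ n, d n < 1/((n:ℝ)+1) := fun n => lt_of_lt_of_le (hdista n) (min_le_left _ _)
    set w : ℕ → ℝ := fun n => 2 * d n with hwdef
    have hw0 : ∀ n, 0 < w n := fun n => by
      have := hd0 n; simp only [hwdef]; linarith
    have hwδ : ∀ n, w n < δ/4 := fun n => by
      have := hdδ n; simp only [hwdef]; linarith
    set φ : ℕ → X → ℝ := fun n z => (1 / t n) * max 0 (1 - dist z (a n) / w n) with hφdef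
    have hφ0 : ∀ n z, 0 ≤ φ n z :=
      fun n z => mul_nonneg (one_div_pos.mpr (htpos n)).le (le_max_left _ _)
    have hφle : ∀ n z, φ n z ≤ 1 / t n := by
      intro n z
      have hm1 : max 0 (1 - dist z (a n) / w n) ≤ 1 := by
        apply max_le (by norm_num)
        have : 0 ≤ dist z (a n) / w n := div_nonneg dist_nonneg (hw0 n).le
        linarith
      calc (1 / t n) * max 0 (1 - dist z (a n) / w n) ≤ (1 / t n) * 1 :=
            mul_le_mul_of_nonneg_left hm1 (one_div_pos.mpr (htpos n)).le
        _ = 1 / t n := mul_one _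
    have hφhalf : ∀ n z, φ n z ≤ 1 / 2 := by
      intro n z
      refine (hφle n z).trans ?_
      rw [div_le_div_iff₀ (htpos n) (by norm_num)]
      linarith [ht2 n]
    have hbdd : ∀ z, BddAbove (Set.range fun n => φ n z) := by
      intro z
      refine ⟨1/2, ?_⟩
      rintro _ ⟨n, rfl⟩
      exact hφhalf n z
    have hsupp : ∀ n z, φ n z ≠ 0 → dist z (a n) < w n := by
      intro n z hz
      by_contra hcon
      apply hz
      have hm1 : 1 - dist z (a n) / w n ≤ 0 := by
        have : 1 ≤ dist z (a n) / w n := (one_le_div (hw0 n)).mpr (not_lt.mp hcon)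
        linarith
      simp only [hφdef]
      rw [max_eq_left hm1, mul_zero]
    set g : X → ℝ := fun z => ⨆ n, φ n z with hgdef
    have hgeq : ∀ n z, dist z (a n) < δ/2 → g z = φ n z := by
      intro n z hz
      have hzero : ∀ m, m ≠ n → φ m z = 0 := by
        intro m hm
        by_contra hcon
        have hz1 : dist z (a m) < w m := hsupp m z hcon
        have hz2 : dist (a m) (a n) ≤ dist z (a m) + dist z (a n) := dist_triangle_left _ _ _
        have hz3 := hsep m n hm
        have hz4 := hwδ m
        linarith
      simp only [hgdef]
      apply le_antisymm
      · apply ciSup_le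
        intro m
        rcases eq_or_ne m n with h | h
        · subst h; exact le_refl _
        · rw [hzero m h]; exact hφ0 n z
      · exact le_ciSup (hbdd z) n
    have hga : ∀ n, g (a n) = 1 / t n := by
      intro n
      rw [hgeq n (a n) (by rw [dist_self]; linarith)]
      simp only [hφdef]
      rw [dist_self, zero_div, sub_zero, max_eq_right (by norm_num : (0:ℝ) ≤ 1), mul_one]
    have hgb : ∀ n, g (b n) = 1 / (2 * t n) := by
      intro n
      have hdistb : dist (b n) (a n) < δ/2 := by
        rw [dist_comm]
        have h5 := hdδ n
        simp only [hddef] at h5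
        linarith
      rw [hgeq n (b n) hdistb]
      simp only [hφdef]
      rw [dist_comm]
      have hdw : dist (a n) (b n) / w n = 1/2 := by
        have h5 := hd0 n
        simp only [hddef] at h5
        simp only [hwdef, hddef]
        rw [div_eq_div_iff (by linarith) (by norm_num)]
        ring
      rw [hdw, show (1:ℝ) - 1/2 = 1/2 by norm_num,
        max_eq_right (by norm_num : (0:ℝ) ≤ 1/2), div_mul_div_comm, one_mul, mul_comm]
    have hφlip : ∀ n u v, |φ n u - φ n v| ≤ dist u v / (t n * w n) := by
      intro n u v
      have key1 : φ n u - φ n v =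
          (1 / t n) * (max (1 - dist u (a n) / w n) 0 - max (1 - dist v (a n) / w n) 0) := by
        simp only [hφdef]
        rw [max_comm (0:ℝ) _, max_comm (0:ℝ) _]
        ring
      rw [key1, abs_mul]
      have h5 : |max (1 - dist u (a n) / w n) 0 - max (1 - dist v (a n) / w n) 0| ≤
          |(1 - dist u (a n) / w n) - (1 - dist v (a n) / w n)| := abs_max_sub_max_le_abs _ _ _
      have h6 : (1 - dist u (a n) / w n) - (1 - dist v (a n) / w n) =
          (dist v (a n) - dist u (a n)) / w n := by ring
      have h7 : |(dist v (a n) - dist u (a n)) / w n| ≤ dist u v / w n := by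
        rw [abs_div, abs_of_pos (hw0 n)]
        gcongr
        rw [abs_sub_comm]
        exact abs_dist_sub_le u v (a n)
      have h8 : |(1:ℝ) / t n| = 1 / t n := abs_of_pos (one_div_pos.mpr (htpos n))
      rw [h8]
      calc (1 / t n) * |max (1 - dist u (a n) / w n) 0 - max (1 - dist v (a n) / w n) 0|
          ≤ (1 / t n) * (dist u v / w n) := by
            apply mul_le_mul_of_nonneg_left _ (one_div_pos.mpr (htpos n)).le
            rw [h6] at h5
            linarith [h5, h7]
        _ = dist u v / (t n * w n) := by
            rw [div_mul_div_comm, one_mul]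
    have hgUC : UniformContinuous g := by
      rw [Metric.uniformContinuous_iff]
      intro ε hε
      obtain ⟨N, hNgt⟩ := exists_nat_gt (1/ε)
      have hN : ∀ n, N ≤ n → 1 / t n < ε := by
        intro n hn
        have hcast : (N:ℝ) ≤ n := by exact_mod_cast hn
        have hl := htlin n
        have hn0 : (0:ℝ) ≤ n := Nat.cast_nonneg n
        have h2' : (N:ℝ) ≤ t n := by linarith
        rw [div_lt_iff₀ (htpos n)]
        rw [div_lt_iff₀ hε] at hNgt
        nlinarith [mul_le_mul_of_nonneg_right h2' hε.le]
      set δ' : ℝ := min (δ/4) ((Finset.range (N+1)).inf'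
        ⟨0, Finset.mem_range.mpr (Nat.succ_pos N)⟩ (fun n => ε * (t n * w n) / 2)) with hδ'def
      have hδ'pos : 0 < δ' := by
        apply lt_min (by linarith)
        refine (Finset.lt_inf'_iff _).2 ?_
        intro i _
        exact div_pos (mul_pos hε (mul_pos (htpos i) (hw0 i))) two_pos
      have hδ'δ : δ' ≤ δ/4 := min_le_left _ _
      have hδ'le : ∀ n, n ≤ N → δ' ≤ ε * (t n * w n) / 2 := by
        intro n hn
        refine le_trans (min_le_right _ _) ?_
        exact Finset.inf'_le _ (Finset.mem_range.mpr (Nat.lt_succ_of_le hn))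
      refine ⟨δ', hδ'pos, ?_⟩
      have hcase : ∀ u v : X, dist u v < δ' → ∀ n, φ n u ≠ 0 → |g u - g v| < ε := by
        intro u v huv n hn
        have hu : dist u (a n) < w n := hsupp n u hn
        have hu2 : dist u (a n) < δ/2 := by linarith [hwδ n]
        have hv : dist v (a n) < δ/2 := by
          calc dist v (a n) ≤ dist v u + dist u (a n) := dist_triangle v u (a n)
            _ < δ' + w n := by rw [dist_comm]; exact add_lt_add huv hu
            _ ≤ δ/4 + δ/4 := add_le_add hδ'δ (hwδ n).le
            _ = δ/2 := by ring
        rw [hgeq n u hu2, hgeq n v hv]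
        rcases le_or_gt N n with hNn | hNn
        · have hb1 := hφle n u
          have hb2 := hφle n v
          have hb3 := hφ0 n u
          have hb4 := hφ0 n v
          have hb5 := hN n hNn
          rw [abs_sub_lt_iff]
          constructor <;> linarith
        · have hlip := hφlip n u v
          have hc : 0 < t n * w n := mul_pos (htpos n) (hw0 n)
          have hδ'n := hδ'le n hNn.le
          have hstep : dist u v / (t n * w n) < ε := by
            rw [div_lt_iff₀ hc]
            nlinarith [mul_pos hε hc]
          linarith
      intro u v huv
      rw [Real.dist_eq]
      by_cases hu : ∃ n, φ n u ≠ 0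
      · obtain ⟨n, hn⟩ := hu
        exact hcase u v huv n hn
      · by_cases hv : ∃ n, φ n v ≠ 0
        · obtain ⟨n, hn⟩ := hv
          rw [abs_sub_comm]
          exact hcase v u (by rw [dist_comm]; exact huv) n hn
        · push_neg at hu hv
          have hgu : g u = 0 := by
            simp only [hgdef]
            apply le_antisymm
            · exact ciSup_le fun n => (hu n).le
            · calc (0:ℝ) = φ 0 u := (hu 0).symm
                _ ≤ ⨆ n, φ n u := le_ciSup (hbdd u) 0
          have hgv : g v = 0 := by
            simp only [hgdef]
            apply le_antisymm
            · exact ciSup_le fun n => (hv n).le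
            · calc (0:ℝ) = φ 0 v := (hv 0).symm
                _ ≤ ⨆ n, φ n v := le_ciSup (hbdd v) 0
          rw [hgu, hgv]
          simpa using hε
    -- now derive the contradiction: f * g is uniformly continuous but oscillates
    have hprod := hring f g hf hgUC
    obtain ⟨δ₂, hδ₂pos, hδ₂⟩ := Metric.uniformContinuous_iff.mp hprod (1/4) (by norm_num)
    obtain ⟨n, hngt⟩ := exists_nat_gt (1/δ₂)
    have hdn : dist (a n) (b n) < δ₂ := by
      have h5 := hd1 n
      simp only [hddef] at h5
      have h6 : 1/((n:ℝ)+1) < δ₂ := by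
        rw [div_lt_iff₀ (by positivity)]
        rw [div_lt_iff₀ hδ₂pos] at hngt
        nlinarith [hδ₂pos]
      linarith
    have hosc : |f (a n) * g (a n) - f (b n) * g (b n)| < 1/4 := by
      simpa [Real.dist_eq] using hδ₂ hdn
    rw [hga n, hgb n] at hosc
    have htnne : t n ≠ 0 := (htpos n).ne'
    have hfa : f (a n) * (1 / t n) = 1 := by
      have h5 : f (a n) = t n := rfl
      rw [h5]
      field_simp
    have hfb1 : t n - 1 < f (b n) ∧ f (b n) < t n + 1 := by
      have hdd : dist (a n) (b n) < δ := by
        have h5 := hdδ n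
        simp only [hddef] at h5
        linarith
      have h6 := hδ hdd
      rw [Real.dist_eq, abs_sub_lt_iff] at h6
      constructor <;> [linarith [h6.2]; linarith [h6.1]]
    rw [hfa] at hosc
    rw [abs_sub_lt_iff] at hosc
    have h34 : 3/4 < f (b n) * (1 / (2 * t n)) := by linarith [hosc.1]
    have htn := ht2 n
    have hmul : f (b n) * (1 / (2 * t n)) * (2 * t n) = f (b n) := by
      field_simp
    have h5 := mul_lt_mul_of_pos_right h34 (by positivity : (0:ℝ) < 2 * t n)
    rw [hmul] at h5
    linarith [hfb1.2]
  · intro h f g hf hg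
    exact UX_aux_mpr h f g hf hg
end

section
/- Let (X,d) be a metric space. If there exists a subset A ⊆ X that is not Bourbaki-bounded and such that for every δ > 0 the set {x ∈ A : I(x) ≥ δ} is finite (where I(x) = d(x, X∖{x}) is the isolation index), then there exist uniformly continuous functions f, h : X → ℝ whose product is not uniformly continuous; in particular U(X) is not a ring. -/
/-- The Atsuji isolation index `I(x) = d(x, X \ {x})`, computed in `[0,∞]` so
that it is `∞` when `x` is the only point of `X`. -/
noncomputable def isolationIndex {X : Type*} [MetricSpace X] (x : X) : ENNReal :=
  EMetric.infEdist x ({x}ᶜ : Set X)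

/-- If some `A ⊆ X` is not Bourbaki-bounded and `{x ∈ A : I(x) ≥ δ}` is finite
for every `δ > 0`, then there are two uniformly continuous real functions on
`X` whose product is not uniformly continuous; in particular `U(X)` is not a
ring. -/
theorem not_ring_of_nonBB {X : Type*} [MetricSpace X]
    (A : Set X) (hA : ¬ IsBourbakiBoundedSubset A)
    (hfin : ∀ δ : ℝ, 0 < δ → {x ∈ A | ENNReal.ofReal δ ≤ isolationIndex x}.Finite) :
    ∃ f h : X → ℝ, UniformContinuous f ∧ UniformContinuous h ∧
      ¬ UniformContinuous (fun x => f x * h x) := by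
  rw [IsBourbakiBoundedSubset] at hA
  push_neg at hA
  obtain ⟨f0, hf0, hub⟩ := hA
  set g : X → ℝ := fun z => |f0 z| with hgdef
  have hg : UniformContinuous g := by
    have : g = (fun t : ℝ => |t|) ∘ f0 := rfl
    rw [this]
    exact Real.uniformContinuous_abs.comp hf0
  have hub' : ∀ C : ℝ, ∃ x ∈ A, C < g x := hub
  -- modulus of g at 1
  obtain ⟨δ₁, hδ₁pos, hδ₁⟩ := Metric.uniformContinuous_iff.mp hg 1 one_pos
  -- scale for the n-th point
  set e : ℕ → ℝ := fun n => min (1 / (n + 1)) (δ₁ / 7) with hedef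
  have hepos : ∀ n : ℕ, 0 < e n := by
    intro n
    refine lt_min (by positivity) (by positivity)
  have heδ : ∀ n : ℕ, e n ≤ δ₁ / 7 := fun n => min_le_right _ _
  have heinv : ∀ n : ℕ, e n ≤ 1 / (n + 1) := fun n => min_le_left _ _
  -- the one-step selection lemma
  have step : ∀ (n : ℕ) (L : ℝ), ∃ p : X × X, p.1 ∈ A ∧ L < g p.1 ∧
      0 < dist p.1 p.2 ∧ dist p.1 p.2 < e n := by
    intro n L
    have hF := hfin (e n) (hepos n)
    obtain ⟨C, hC⟩ := (hF.image g).bddAbove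
    obtain ⟨x, hxA, hx⟩ := hub' (max L C)
    have hxI : isolationIndex x < ENNReal.ofReal (e n) := by
      by_contra hle
      push_neg at hle
      have : x ∈ {z ∈ A | ENNReal.ofReal (e n) ≤ isolationIndex z} := ⟨hxA, hle⟩
      have : g x ≤ C := hC (Set.mem_image_of_mem g this)
      have := lt_of_le_of_lt (le_max_right L C) hx
      linarith
    rw [isolationIndex] at hxI
    obtain ⟨y, hy, hyd⟩ := EMetric.infEdist_lt_iff.mp hxI
    refine ⟨(x, y), hxA, lt_of_le_of_lt (le_max_left L C) hx, ?_, ?_⟩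
    · simp only [dist_pos]
      exact fun h => hy (by simp [h.symm])
    · exact (edist_lt_ofReal).mp hyd
  choose P hPA hPg hPpos hPlt using step
  -- the recursive sequence of pairs
  set u : ℕ → X × X := fun n =>
    Nat.rec (motive := fun _ => X × X) (P 0 1)
      (fun k p => P (k + 1) (max (g p.1 + 1) (k + 2))) n with hudef
  set x : ℕ → X := fun n => (u n).1 with hxdef
  set y : ℕ → X := fun n => (u n).2 with hydef
  set r : ℕ → ℝ := fun n => dist (x n) (y n) with hrdef
  have hu0 : u 0 = P 0 1 := rfl
  have huS : ∀ n, u (n + 1) = P (n + 1) (max (g (x n) + 1) (n + 2)) := fun n => rfl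
  have hxA : ∀ n, x n ∈ A := by
    intro n
    cases n with
    | zero => exact hPA 0 1
    | succ k => exact hPA (k + 1) _
  have hrpos : ∀ n, 0 < r n := by
    intro n
    cases n with
    | zero => exact hPpos 0 1
    | succ k => exact hPpos (k + 1) _
  have hrlt : ∀ n, r n < e n := by
    intro n
    cases n with
    | zero => exact hPlt 0 1
    | succ k => exact hPlt (k + 1) _
  have hgx : ∀ n : ℕ, (n : ℝ) + 1 < g (x n) := by
    intro n
    cases n with
    | zero => exact lt_of_eq_of_lt (by norm_num : ((0:ℕ):ℝ) + 1 = 1) (hPg 0 1)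
    | succ k =>
      have := hPg (k + 1) (max (g (x k) + 1) (k + 2))
      have h2 : ((k : ℝ) + 1) + 1 ≤ max (g (x k) + 1) ((k : ℝ) + 2) := by
        have : ((k : ℝ) + 1) + 1 ≤ (k : ℝ) + 2 := by linarith
        exact le_trans this (le_max_right _ _)
      calc ((k + 1 : ℕ) : ℝ) + 1 = ((k : ℝ) + 1) + 1 := by push_cast; ring
        _ ≤ max (g (x k) + 1) ((k : ℝ) + 2) := h2
        _ < g (x (k + 1)) := by
            have h3 := hPg (k + 1) (max (g (x k) + 1) (k + 2))
            rw [hxdef]; simp only [huS]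
            first
            | exact h3
            | (convert h3 using 3 <;> push_cast <;> ring)
  have hgxpos : ∀ n, 0 < g (x n) := fun n => lt_trans (by positivity) (hgx n)
  have hmono : ∀ n : ℕ, g (x n) + 1 < g (x (n + 1)) := by
    intro n
    have := hPg (n + 1) (max (g (x n) + 1) (n + 2))
    have h1 : g (x n) + 1 ≤ max (g (x n) + 1) ((n : ℝ) + 2) := le_max_left _ _
    calc g (x n) + 1 ≤ max (g (x n) + 1) ((n : ℝ) + 2) := h1
      _ < g (x (n + 1)) := by
          have h3 := hPg (n + 1) (max (g (x n) + 1) (n + 2))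
          rw [hxdef]; simp only [huS]
          first
          | exact h3
          | (convert h3 using 3 <;> push_cast <;> ring)
  have hgap : ∀ m n : ℕ, m < n → g (x m) + 1 < g (x n) := by
    intro m n hmn
    induction n with
    | zero => omega
    | succ k ih =>
      rcases Nat.lt_succ_iff_lt_or_eq.mp hmn with h | h
      · exact lt_trans (ih h) (lt_trans (lt_add_one _) (hmono k))
      · subst h; exact hmono m
  have hsep : ∀ m n : ℕ, m ≠ n → δ₁ ≤ dist (x m) (x n) := by
    intro m n hmn
    by_contra hlt
    push_neg at hlt
    have hab := hδ₁ hlt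
    rw [Real.dist_eq, abs_sub_lt_iff] at hab
    rcases Nat.lt_or_ge m n with h | h
    · have h2 := hgap m n h; linarith [hab.2]
    · have hnm : n < m := by omega
      have h2 := hgap n m hnm; linarith [hab.1]
  -- bump functions
  set b : ℕ → ℝ := fun n => (g (x n))⁻¹ with hbdef
  have hbpos : ∀ n, 0 < b n := fun n => inv_pos.mpr (hgxpos n)
  have hble : ∀ n : ℕ, b n ≤ 1 / ((n : ℝ) + 1) := by
    intro n
    rw [hbdef]
    rw [one_div]
    exact inv_anti₀ (by positivity) (le_of_lt (hgx n))
  have hble1 : ∀ n, b n ≤ 1 := by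
    intro n
    refine le_trans (hble n) ?_
    rw [div_le_one (by positivity)]
    linarith [Nat.cast_nonneg (α := ℝ) n]
  set t : ℕ → X → ℝ := fun n z => b n * max 0 (1 - dist z (x n) / r n) with htdef
  have htnonneg : ∀ n z, 0 ≤ t n z := by
    intro n z
    exact mul_nonneg (le_of_lt (hbpos n)) (le_max_left _ _)
  have htle : ∀ n z, t n z ≤ b n := by
    intro n z
    have h1 : max 0 (1 - dist z (x n) / r n) ≤ 1 := by
      refine max_le zero_le_one ?_
      have : 0 ≤ dist z (x n) / r n := div_nonneg dist_nonneg (le_of_lt (hrpos n))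
      linarith
    calc t n z ≤ b n * 1 := mul_le_mul_of_nonneg_left h1 (le_of_lt (hbpos n))
      _ = b n := mul_one _
  have htle1 : ∀ n z, t n z ≤ 1 := fun n z => le_trans (htle n z) (hble1 n)
  set h : X → ℝ := fun z => ⨆ n, t n z with hhdef
  have hbdd : ∀ z, BddAbove (Set.range fun n => t n z) := by
    intro z
    exact ⟨1, by rintro _ ⟨n, rfl⟩; exact htle1 n z⟩
  -- value at x n
  have hhx : ∀ n, h (x n) = b n := by
    intro n
    refine le_antisymm (ciSup_le ?_) ?_
    · intro m
      by_cases hmn : m = n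
      · subst hmn
        have : t m (x m) = b m := by
          rw [htdef]
          simp [dist_self, (hrpos m).ne']
        rw [this]
      · have hd : δ₁ ≤ dist (x n) (x m) := hsep n m (Ne.symm hmn)
        have hrm : r m < δ₁ := lt_of_lt_of_le (hrlt m) (le_trans (heδ m) (by linarith))
        have : 1 - dist (x n) (x m) / r m ≤ 0 := by
          have h1 : 1 < dist (x n) (x m) / r m := by
            rw [lt_div_iff₀ (hrpos m)]
            calc 1 * r m = r m := one_mul _
              _ < δ₁ := hrm
              _ ≤ dist (x n) (x m) := hd
          linarith
        have : t m (x n) = 0 := by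
          simp only [htdef]
          rw [max_eq_left this, mul_zero]
        rw [this]
        exact le_of_lt (hbpos n)
    · have : t n (x n) = b n := by
        rw [htdef]
        simp [dist_self, (hrpos n).ne']
      calc b n = t n (x n) := this.symm
        _ ≤ ⨆ m, t m (x n) := le_ciSup (hbdd (x n)) n
  -- value at y n
  have hhy : ∀ n, h (y n) = 0 := by
    intro n
    have hz : ∀ m, t m (y n) = 0 := by
      intro m
      by_cases hmn : m = n
      · subst hmn
        have hne : dist (x m) (y m) ≠ 0 := (hrpos m).ne'
        simp only [htdef, hrdef]
        rw [dist_comm (y m) (x m), div_self hne]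
        simp
      · have hd : δ₁ ≤ dist (x n) (x m) := hsep n m (Ne.symm hmn)
        have hrn : r n < δ₁ / 7 := lt_of_lt_of_le (hrlt n) (heδ n)
        have hrm : r m < δ₁ / 7 := lt_of_lt_of_le (hrlt m) (heδ m)
        have hyd : δ₁ - δ₁ / 7 ≤ dist (y n) (x m) := by
          have htri : dist (x n) (x m) ≤ dist (x n) (y n) + dist (y n) (x m) :=
            dist_triangle _ _ _
          have : dist (x n) (y n) < δ₁ / 7 := hrn
          linarith
        have : 1 - dist (y n) (x m) / r m ≤ 0 := by
          have h1 : 1 < dist (y n) (x m) / r m := by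
            rw [lt_div_iff₀ (hrpos m)]
            have : δ₁ / 7 < δ₁ - δ₁ / 7 := by linarith
            calc 1 * r m = r m := one_mul _
              _ < δ₁ / 7 := hrm
              _ < δ₁ - δ₁ / 7 := this
              _ ≤ dist (y n) (x m) := hyd
          linarith
        simp only [htdef]
        rw [max_eq_left this, mul_zero]
    simp only [hhdef]
    have heq : (fun m => t m (y n)) = fun _ => (0 : ℝ) := funext hz
    rw [heq]
    exact ciSup_const
  -- Lipschitz-type bounds on each bump
  have hkey1 : ∀ n z w, |t n z - t n w| ≤ b n := by
    intro n z w
    rw [abs_sub_le_iff]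
    constructor
    · linarith [htle n z, htnonneg n w]
    · linarith [htle n w, htnonneg n z]
  have hkey2 : ∀ n z w, |t n z - t n w| ≤ dist z w / r n := by
    intro n z w
    simp only [htdef]
    rw [← mul_sub, abs_mul, abs_of_pos (hbpos n)]
    have h1 : |max 0 (1 - dist z (x n) / r n) - max 0 (1 - dist w (x n) / r n)| ≤
        |(1 - dist z (x n) / r n) - (1 - dist w (x n) / r n)| := by
      rw [max_comm (0 : ℝ) (1 - dist z (x n) / r n),
        max_comm (0 : ℝ) (1 - dist w (x n) / r n)]
      exact abs_max_sub_max_le_abs _ _ _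
    have h2 : |(1 - dist z (x n) / r n) - (1 - dist w (x n) / r n)| =
        |dist w (x n) - dist z (x n)| / r n := by
      rw [show (1 - dist z (x n) / r n) - (1 - dist w (x n) / r n)
            = (dist w (x n) - dist z (x n)) / r n by
          rw [sub_div]; ring]
      rw [abs_div, abs_of_pos (hrpos n)]
    have h3 : |dist w (x n) - dist z (x n)| ≤ dist w z := abs_dist_sub_le _ _ _
    calc b n * |max 0 (1 - dist z (x n) / r n) - max 0 (1 - dist w (x n) / r n)|
        ≤ 1 * |(1 - dist z (x n) / r n) - (1 - dist w (x n) / r n)| := by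
          apply mul_le_mul (hble1 n) h1 (abs_nonneg _)
          norm_num
      _ = |dist w (x n) - dist z (x n)| / r n := by rw [one_mul, h2]
      _ ≤ dist w z / r n := by gcongr
      _ = dist z w / r n := by rw [dist_comm]
  -- uniform continuity of h
  have hhUC : UniformContinuous h := by
    rw [Metric.uniformContinuous_iff]
    intro ε hε
    obtain ⟨N, hN⟩ := exists_nat_one_div_lt (show (0:ℝ) < ε / 2 by linarith)
    have hρ : ∀ M : ℕ, ∃ ρ > 0, ∀ n < M, ρ ≤ r n := by
      intro M
      induction M with
      | zero => exact ⟨1, one_pos, fun n hn => absurd hn (Nat.not_lt_zero n)⟩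
      | succ M ih =>
        obtain ⟨ρ, hρpos, hρ⟩ := ih
        refine ⟨min ρ (r M), lt_min hρpos (hrpos M), ?_⟩
        intro n hn
        rcases Nat.lt_succ_iff_lt_or_eq.mp hn with h' | h'
        · exact le_trans (min_le_left _ _) (hρ n h')
        · subst h'; exact min_le_right _ _
    obtain ⟨ρ, hρpos, hρr⟩ := hρ N
    refine ⟨ρ * (ε / 2), by positivity, ?_⟩
    intro z w hzw
    have hterm : ∀ n, |t n z - t n w| ≤ ε / 2 := by
      intro n
      rcases Nat.lt_or_ge n N with hn | hn
      · calc |t n z - t n w| ≤ dist z w / r n := hkey2 n z w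
          _ ≤ dist z w / ρ := by
              gcongr
              exact hρr n hn
          _ ≤ ε / 2 := by
              rw [div_le_iff₀ hρpos]
              nlinarith [dist_nonneg (x := z) (y := w)]
      · calc |t n z - t n w| ≤ b n := hkey1 n z w
          _ ≤ 1 / ((n : ℝ) + 1) := hble n
          _ ≤ 1 / ((N : ℝ) + 1) := by
              gcongr
          _ ≤ ε / 2 := le_of_lt hN
    have habs : |h z - h w| ≤ ε / 2 := by
      rw [abs_sub_le_iff]
      constructor
      · have : h z ≤ h w + ε / 2 := by
          refine ciSup_le fun n => ?_
          have h1 : t n z ≤ t n w + ε / 2 := by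
            have := abs_sub_le_iff.mp (hterm n)
            linarith [this.1]
          refine le_trans h1 ?_
          have : t n w ≤ h w := le_ciSup (hbdd w) n
          linarith
        linarith
      · have : h w ≤ h z + ε / 2 := by
          refine ciSup_le fun n => ?_
          have h1 : t n w ≤ t n z + ε / 2 := by
            have := abs_sub_le_iff.mp (hterm n)
            linarith [this.2]
          refine le_trans h1 ?_
          have : t n z ≤ h z := le_ciSup (hbdd z) n
          linarith
        linarith
    rw [Real.dist_eq]
    linarith
  -- the product is not uniformly continuous
  refine ⟨g, h, hg, hhUC, ?_⟩
  intro hUC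
  obtain ⟨δ, hδpos, hδ⟩ := Metric.uniformContinuous_iff.mp hUC (1 / 2) (by norm_num)
  obtain ⟨n, hn⟩ := exists_nat_one_div_lt hδpos
  have hrn : r n < δ := lt_trans (lt_of_lt_of_le (hrlt n) (heinv n)) hn
  have := hδ (show dist (x n) (y n) < δ from hrn)
  rw [hhx n, hhy n] at this
  have hone : g (x n) * b n = 1 := mul_inv_cancel₀ (hgxpos n).ne'
  rw [hone, mul_zero, Real.dist_eq] at this
  norm_num at this
end

section
/- Let (X,d) be a metric space. If every subset A ⊆ X that is not Bourbaki-bounded contains an infinite uniformly isolated subset, then the product of any two uniformly continuous real-valued functions on X is uniformly continuous (i.e., U(X) is a ring). -/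
/-- If every non-Bourbaki-bounded subset of `X` contains an infinite uniformly
isolated subset, then the product of any two uniformly continuous real-valued
functions on `X` is uniformly continuous (`U(X)` is a ring). -/
theorem ring_of_infinite_unifIsolated {X : Type*} [MetricSpace X]
    (h : ∀ A : Set X, ¬ IsBourbakiBoundedSubset A →
      ∃ B ⊆ A, B.Infinite ∧ IsUniformlyIsolated B) :
    ∀ f g : X → ℝ, UniformContinuous f → UniformContinuous g →
      UniformContinuous (fun x => f x * g x) := by
  intro f g hf hg
  by_contra hfg
  rw [Metric.uniformContinuous_iff] at hfg
  push_neg at hfg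
  obtain ⟨ε, hε, hεbad⟩ := hfg
  have key : ∀ n : ℕ, ∃ x y : X, dist x y < 1/(n+1) ∧
      |f x - f y| < 1/(n+1) ∧ |g x - g y| < 1/(n+1) ∧
      ε ≤ |f x * g x - f y * g y| := by
    intro n
    have hn : (0:ℝ) < 1/(n+1) := by positivity
    obtain ⟨δ₁, hδ₁, hf1⟩ := Metric.uniformContinuous_iff.1 hf (1/(n+1)) hn
    obtain ⟨δ₂, hδ₂, hg1⟩ := Metric.uniformContinuous_iff.1 hg (1/(n+1)) hn
    obtain ⟨x, y, hxy, hbad⟩ := hεbad (min (1/(n+1)) (min δ₁ δ₂)) (by positivity)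
    rw [Real.dist_eq] at hbad
    refine ⟨x, y, lt_of_lt_of_le hxy (min_le_left _ _), ?_, ?_, hbad⟩
    · have := hf1 (lt_of_lt_of_le hxy (le_trans (min_le_right _ _) (min_le_left _ _)))
      rwa [Real.dist_eq] at this
    · have := hg1 (lt_of_lt_of_le hxy (le_trans (min_le_right _ _) (min_le_right _ _)))
      rwa [Real.dist_eq] at this
  choose x y hdist hfd hgd hbad using key
  have hlow : ∀ n : ℕ, ε * (n+1) - 1 ≤ |f (x n)| + |g (x n)| := by
    intro n
    set t : ℝ := 1/(n+1) with ht
    have htpos : (0:ℝ) < t := by positivity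
    have htmul : t * (n+1) = 1 := by
      rw [ht]; field_simp
    have ht1 : t ≤ 1 := by
      rw [ht]
      rw [div_le_one (by positivity)]
      linarith [Nat.cast_nonneg (α := ℝ) n]
    have hsplit : ε ≤ |f (x n)| * |g (x n) - g (y n)| + |g (y n)| * |f (x n) - f (y n)| := by
      calc ε ≤ |f (x n) * g (x n) - f (y n) * g (y n)| := hbad n
        _ = |f (x n) * (g (x n) - g (y n)) + g (y n) * (f (x n) - f (y n))| := by congr 1; ring
        _ ≤ |f (x n) * (g (x n) - g (y n))| + |g (y n) * (f (x n) - f (y n))| := abs_add_le _ _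
        _ = |f (x n)| * |g (x n) - g (y n)| + |g (y n)| * |f (x n) - f (y n)| := by
            rw [abs_mul, abs_mul]
    have hgy : |g (y n)| ≤ |g (x n)| + t := by
      have := abs_sub_abs_le_abs_sub (g (y n)) (g (x n))
      have h2 : |g (y n) - g (x n)| = |g (x n) - g (y n)| := abs_sub_comm _ _
      have := hgd n
      rw [← ht] at this
      linarith [abs_sub_abs_le_abs_sub (g (y n)) (g (x n)),
        (abs_sub_comm (g (y n)) (g (x n)))]
    have hεt : ε ≤ (|f (x n)| + |g (x n)| + t) * t := by
      have h1 : |f (x n)| * |g (x n) - g (y n)| ≤ |f (x n)| * t :=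
        mul_le_mul_of_nonneg_left (le_of_lt (by rw [ht]; exact hgd n)) (abs_nonneg _)
      have h2 : |g (y n)| * |f (x n) - f (y n)| ≤ (|g (x n)| + t) * t := by
        apply mul_le_mul (by exact hgy) (le_of_lt (by rw [ht]; exact hfd n))
          (abs_nonneg _) (by positivity)
      nlinarith [hsplit]
    have := mul_le_mul_of_nonneg_right hεt (le_of_lt (show (0:ℝ) < (n+1) by positivity))
    have hexp : (|f (x n)| + |g (x n)| + t) * t * (n+1)
        = |f (x n)| + |g (x n)| + t := by
      rw [mul_assoc, htmul, mul_one]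
    nlinarith [abs_nonneg (f (x n)), abs_nonneg (g (x n))]
  have hA : ¬ IsBourbakiBoundedSubset (Set.range x) := by
    intro hBB
    obtain ⟨C, hC⟩ := hBB (fun z => |f z| + |g z|)
      ((Real.uniformContinuous_abs.comp hf).add (Real.uniformContinuous_abs.comp hg))
    obtain ⟨N, hN⟩ := exists_nat_gt ((C+1)/ε)
    have hCN : C + 1 < ε * N := by
      rw [div_lt_iff₀ hε] at hN
      linarith
    have hmem := hC (x N) ⟨N, rfl⟩
    have h1 : |f (x N)| + |g (x N)| ≤ C := by
      have := le_abs_self (|f (x N)| + |g (x N)|)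
      linarith
    have := hlow N
    nlinarith [Nat.cast_nonneg (α := ℝ) N]
  obtain ⟨B, hBA, hBinf, ε₀, hε₀, hiso⟩ := h _ hA
  have hidx : ∀ n : ℕ, x n ∈ B → ε₀ ≤ 1/(n+1) := by
    intro n hn
    by_contra hlt
    push_neg at hlt
    have hyx : y n = x n := by
      by_contra hne
      have := hiso (x n) hn (y n) hne
      linarith [hdist n]
    have := hbad n
    rw [hyx] at this
    simp at this
    linarith
  obtain ⟨N, hN⟩ := exists_nat_gt (1/ε₀)
  have hsub : B ⊆ x '' (Set.Iio N) := by
    intro p hp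
    obtain ⟨n, rfl⟩ := hBA hp
    refine ⟨n, ?_, rfl⟩
    have h1 := hidx n hp
    have h2 : (n:ℝ) + 1 ≤ 1/ε₀ := by
      rw [le_div_iff₀ hε₀]
      rw [le_div_iff₀ (show (0:ℝ) < n+1 by positivity)] at h1
      linarith
    have : (n:ℝ) < N := by linarith
    exact_mod_cast this
  exact hBinf (Set.Finite.subset ((Set.finite_Iio N).image x) hsub)
end

section
/- Let (X,d) be a metric space. Suppose there exists a Bourbaki-bounded subset F ⊆ X such that for every γ > 0 the set X ∖ F^γ = {x ∈ X : d(x,F) > γ} is uniformly isolated. Then the product of any two uniformly continuous real-valued functions on X is uniformly continuous (i.e., U(X) is a ring). -/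
/-- If there is a Bourbaki-bounded subset `F ⊆ X` such that for every `γ > 0`
the set `X \ F^γ = {x : d(x,F) > γ}` is uniformly isolated (the distance to
`F` is computed in `[0,∞]`, so that it is `∞` when `F = ∅`), then the product
of any two uniformly continuous real-valued functions on `X` is uniformly
continuous (`U(X)` is a ring). -/
theorem ring_of_BB_core {X : Type*} [MetricSpace X]
    (F : Set X) (hF : IsBourbakiBoundedSubset F)
    (hiso : ∀ γ : ℝ, 0 < γ →
      IsUniformlyIsolated {x : X | ENNReal.ofReal γ < EMetric.infEdist x F}) :
    ∀ f g : X → ℝ, UniformContinuous f → UniformContinuous g →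
      UniformContinuous (fun x => f x * g x) := by
  intro f g hf hg
  obtain ⟨Cf, hCf⟩ := hF f hf
  obtain ⟨Cg, hCg⟩ := hF g hg
  -- uniform continuity with bound 1
  obtain ⟨δf, hδf, hδf'⟩ := Metric.uniformContinuous_iff.1 hf 1 one_pos
  obtain ⟨δg, hδg, hδg'⟩ := Metric.uniformContinuous_iff.1 hg 1 one_pos
  set δ0 : ℝ := min δf δg with hδ0def
  have hδ0 : 0 < δ0 := lt_min hδf hδg
  set γ : ℝ := δ0 / 2 with hγdef
  have hγ : 0 < γ := by positivity
  obtain ⟨ε0, hε0, hε0'⟩ := hiso γ hγ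
  set M : ℝ := |Cf| + |Cg| + 1 with hMdef
  have hM : 0 < M := by positivity
  -- bounds on the "near" region
  have hnear : ∀ x : X, EMetric.infEdist x F ≤ ENNReal.ofReal γ →
      |f x| ≤ M ∧ |g x| ≤ M := by
    intro x hx
    have hlt : EMetric.infEdist x F < ENNReal.ofReal δ0 := by
      refine lt_of_le_of_lt hx ?_
      exact ENNReal.ofReal_lt_ofReal_iff hδ0 |>.2 (by simp [hγdef]; linarith)
    obtain ⟨y, hyF, hy⟩ := EMetric.infEdist_lt_iff.1 hlt
    have hdist : dist x y < δ0 := by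
      rwa [edist_lt_ofReal] at hy
    constructor
    · have h1 : |f x - f y| < 1 := by
        have := hδf' (a := x) (b := y) (lt_of_lt_of_le hdist (min_le_left _ _))
        simpa [Real.dist_eq] using this
      have := hCf y hyF
      have : |f x| ≤ |f y| + |f x - f y| := by
        have := abs_sub_abs_le_abs_sub (f x) (f y); linarith [abs_nonneg (f x - f y)]
      have hfy := hCf y hyF
      have h2 : |f x| ≤ Cf + 1 := by linarith
      have h3 : Cf ≤ |Cf| := le_abs_self _
      have h4 : (0:ℝ) ≤ |Cg| := abs_nonneg _
      simp only [hMdef]; linarith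
    · have h1 : |g x - g y| < 1 := by
        have := hδg' (a := x) (b := y) (lt_of_lt_of_le hdist (min_le_right _ _))
        simpa [Real.dist_eq] using this
      have : |g x| ≤ |g y| + |g x - g y| := by
        have := abs_sub_abs_le_abs_sub (g x) (g y); linarith [abs_nonneg (g x - g y)]
      have hgy := hCg y hyF
      have h2 : |g x| ≤ Cg + 1 := by linarith
      have h3 : Cg ≤ |Cg| := le_abs_self _
      have h4 : (0:ℝ) ≤ |Cf| := abs_nonneg _
      simp only [hMdef]; linarith
  rw [Metric.uniformContinuous_iff]
  intro ε hε
  obtain ⟨δ1, hδ1, hδ1'⟩ := Metric.uniformContinuous_iff.1 hf (ε / (2 * M)) (by positivity)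
  obtain ⟨δ2, hδ2, hδ2'⟩ := Metric.uniformContinuous_iff.1 hg (ε / (2 * M)) (by positivity)
  refine ⟨min (min δ1 δ2) ε0, by positivity, ?_⟩
  intro x y hxy
  by_cases hx : ENNReal.ofReal γ < EMetric.infEdist x F
  · have : y = x := by
      by_contra hne
      have := hε0' x hx y hne
      have : dist x y < ε0 := lt_of_lt_of_le hxy (min_le_right _ _)
      linarith [hε0' x hx y hne, dist_comm x y ▸ this]
    simp [this, hε]
  · by_cases hy : ENNReal.ofReal γ < EMetric.infEdist y F
    · have : x = y := by
        by_contra hne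
        have h1 := hε0' y hy x hne
        have h2 : dist x y < ε0 := lt_of_lt_of_le hxy (min_le_right _ _)
        rw [dist_comm] at h1
        linarith
      simp [this, hε]
    · push_neg at hx hy
      obtain ⟨hfx, hgx⟩ := hnear x hx
      obtain ⟨hfy, hgy⟩ := hnear y hy
      have hd1 : dist x y < δ1 :=
        lt_of_lt_of_le hxy (le_trans (min_le_left _ _) (min_le_left _ _))
      have hd2 : dist x y < δ2 :=
        lt_of_lt_of_le hxy (le_trans (min_le_left _ _) (min_le_right _ _))
      have hfd : |f x - f y| < ε / (2 * M) := by
        have := hδ1' (a := x) (b := y) hd1; simpa [Real.dist_eq] using this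
      have hgd : |g x - g y| < ε / (2 * M) := by
        have := hδ2' (a := x) (b := y) hd2; simpa [Real.dist_eq] using this
      have key : |f x * g x - f y * g y| < ε := by
        have h : f x * g x - f y * g y = f x * (g x - g y) + g y * (f x - f y) := by ring
        have step1 : |f x * g x - f y * g y| ≤ |f x| * |g x - g y| + |g y| * |f x - f y| := by
          rw [h]; exact le_trans (abs_add_le _ _) (by rw [abs_mul, abs_mul])
        have t1 : |f x| * |g x - g y| ≤ M * |g x - g y| :=
          mul_le_mul_of_nonneg_right hfx (abs_nonneg _)
        have t2 : |g y| * |f x - f y| ≤ M * |f x - f y| :=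
          mul_le_mul_of_nonneg_right hgy (abs_nonneg _)
        have u1 : M * |g x - g y| < M * (ε / (2 * M)) := by
          exact mul_lt_mul_of_pos_left hgd hM
        have u2 : M * |f x - f y| < M * (ε / (2 * M)) := by
          exact mul_lt_mul_of_pos_left hfd hM
        have heq : M * (ε / (2 * M)) + M * (ε / (2 * M)) = ε := by
          field_simp
          ring
        calc |f x * g x - f y * g y|
            ≤ |f x| * |g x - g y| + |g y| * |f x - f y| := step1
          _ ≤ M * |g x - g y| + M * |f x - f y| := add_le_add t1 t2
          _ < M * (ε / (2 * M)) + M * (ε / (2 * M)) := add_lt_add u1 u2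
          _ = ε := heq
      simpa [Real.dist_eq] using key
end

section
/- If (x_n) and (y_n) are sequences in a metric space X satisfying d(x_n, x_m) ≥ ε > 0 for all n ≠ m and 0 < d(y_n, x_n) ≤ min{ε/3, 1/n} for every n, and (α_n) is a real sequence converging to 0, then the function g₀ defined on {x_n : n ∈ ℕ} ∪ {y_n : n ∈ ℕ} by g₀(x_n) = α_n and g₀(y_n) = 0 is uniformly continuous (on that subspace). -/
open Filter

/-- If `(x_n)` is `ε`-separated, `0 < d(y_n, x_n) ≤ min (ε/3) (1/n)` (indices
starting at 1, i.e. `1/(n+1)` for `n : ℕ`), and `α_n → 0`, then any function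
equal to `α_n` at `x_n` and `0` at `y_n` is uniformly continuous on
`{x_n} ∪ {y_n}`. -/
theorem uniformContinuousOn_of_separated {X : Type*} [MetricSpace X]
    (x y : ℕ → X) (ε : ℝ) (hε : 0 < ε)
    (hsep : ∀ n m : ℕ, n ≠ m → ε ≤ dist (x n) (x m))
    (hclose : ∀ n : ℕ, 0 < dist (y n) (x n) ∧
      dist (y n) (x n) ≤ min (ε / 3) (1 / (n + 1 : ℝ)))
    (α : ℕ → ℝ) (hα : Tendsto α atTop (nhds 0))
    (g : X → ℝ) (hgx : ∀ n, g (x n) = α n) (hgy : ∀ n, g (y n) = 0) :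
    UniformContinuousOn g (Set.range x ∪ Set.range y) := by
  rw [Metric.uniformContinuousOn_iff]
  intro η hη
  obtain ⟨N, hN⟩ := Metric.tendsto_atTop.mp hα η hη
  set S := insert (ε / 3) ((Finset.range N).image fun n => dist (y n) (x n)) with hS
  have hSne : S.Nonempty := ⟨_, Finset.mem_insert_self _ _⟩
  set δ := S.min' hSne with hδ
  have hδpos : 0 < δ := by
    rw [hδ, Finset.lt_min'_iff]
    intro a ha
    rcases Finset.mem_insert.mp ha with rfl | ha
    · linarith
    · obtain ⟨n, _, rfl⟩ := Finset.mem_image.mp ha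
      exact (hclose n).1
  have hδ1 : δ ≤ ε / 3 := Finset.min'_le _ _ (Finset.mem_insert_self _ _)
  have hδ2 : ∀ n < N, δ ≤ dist (y n) (x n) := fun n hn =>
    Finset.min'_le _ _ (Finset.mem_insert_of_mem
      (Finset.mem_image.mpr ⟨n, Finset.mem_range.mpr hn, rfl⟩))
  have hc : ∀ n, dist (y n) (x n) ≤ ε / 3 := fun n => le_trans (hclose n).2 (min_le_left _ _)
  have key : ∀ n, N ≤ n → dist (g (x n)) (g (y n)) < η := by
    intro n hn
    rw [hgx, hgy]
    simpa using hN n hn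
  refine ⟨δ, hδpos, ?_⟩
  rintro u (⟨n, rfl⟩ | ⟨n, rfl⟩) v (⟨m, rfl⟩ | ⟨m, rfl⟩) hd
  · -- x n, x m
    rcases eq_or_ne n m with rfl | hnm
    · simpa using hη
    · have := hsep n m hnm; linarith
  · -- x n, y m
    rcases eq_or_ne n m with rfl | hnm
    · rcases lt_or_ge n N with h | h
      · have := hδ2 n h
        rw [dist_comm] at hd
        linarith
      · exact key n h
    · have h1 := hsep n m hnm
      have h2 := dist_triangle (x n) (y m) (x m)
      have h3 : dist (y m) (x m) ≤ ε / 3 := hc m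
      linarith
  · -- y n, x m
    rcases eq_or_ne n m with rfl | hnm
    · rcases lt_or_ge n N with h | h
      · have := hδ2 n h
        linarith
      · rw [dist_comm (g (y n))]; exact key n h
    · have h2 := dist_triangle (x n) (y n) (x m)
      have h3 : dist (x n) (y n) ≤ ε / 3 := dist_comm (x n) (y n) ▸ hc n
      have h4 : dist (y n) (x m) < δ := hd
      have h5 : ε ≤ dist (x n) (x m) := hsep n m hnm
      linarith
  · -- y n, y m
    rcases eq_or_ne n m with rfl | hnm
    · simpa using hη
    · have h1 := hsep n m hnm
      have h2 := dist_triangle (x n) (y n) (x m)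
      have h3 := dist_triangle (y n) (y m) (x m)
      have h4 : dist (x n) (y n) ≤ ε / 3 := dist_comm (x n) (y n) ▸ hc n
      have h5 : dist (y m) (x m) ≤ ε / 3 := hc m
      have h6 := dist_triangle (x n) (y m) (x m)
      have h7 := dist_triangle (x n) (y n) (y m)
      linarith
end

section
/- For every subset A of a metric space X and every bounded uniformly continuous function f₀ : A → ℝ, there exists a bounded uniformly continuous function f : X → ℝ with f restricted to A equal to f₀. -/
section Aux

open Filter Finset

/-- clamping a real to `[-M, M]` is 1-Lipschitz -/
lemma clamp_lipschitz (M : ℝ) : LipschitzWith 1 (fun t : ℝ => max (-M) (min M t)) := by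
  apply LipschitzWith.of_dist_le_mul
  intro s t
  simp only [Real.dist_eq, NNReal.coe_one, one_mul]
  calc |max (-M) (min M s) - max (-M) (min M t)|
      = |max (min M s) (-M) - max (min M t) (-M)| := by rw [max_comm (-M), max_comm (-M)]
    _ ≤ |min M s - min M t| := abs_max_sub_max_le_abs _ _ _
    _ ≤ max |M - M| |s - t| := abs_min_sub_min_le_max _ _ _ _
    _ ≤ |s - t| := by simp

lemma clamp_abs_le {M : ℝ} (hM : 0 ≤ M) (t : ℝ) : |max (-M) (min M t)| ≤ M := by
  rw [abs_le]
  constructor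
  · exact le_max_left _ _
  · exact max_le (by linarith) (min_le_left _ _)

lemma clamp_eq_self {M t : ℝ} (h : |t| ≤ M) : max (-M) (min M t) = t := by
  rw [abs_le] at h
  rw [min_eq_right h.2, max_eq_right h.1]

end Aux

open Filter Finset

/-- McShane-type extension: every bounded uniformly continuous real-valued
function on a subset `A` of a metric space `X` extends to a bounded uniformly
continuous function on all of `X`. -/
theorem exists_bounded_uniformContinuous_extension {X : Type*} [MetricSpace X]
    (A : Set X) (f₀ : A → ℝ) (huc : UniformContinuous f₀)
    (hbd : ∃ C : ℝ, ∀ a : A, |f₀ a| ≤ C) :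
    ∃ f : X → ℝ, UniformContinuous f ∧ (∃ C : ℝ, ∀ x : X, |f x| ≤ C) ∧
      ∀ a : A, f a = f₀ a := by
  rcases isEmpty_or_nonempty A with hA | hA
  · exact ⟨0, uniformContinuous_const, ⟨0, by simp⟩, fun a => (hA.false a).elim⟩
  obtain ⟨C, hC⟩ := hbd
  have hC0 : 0 ≤ C := (abs_nonneg _).trans (hC (Classical.arbitrary A))
  -- moduli of continuity
  have key : ∀ n : ℕ, ∃ δ : ℝ, 0 < δ ∧
      ∀ a b : A, dist (a : X) (b : X) < δ → |f₀ a - f₀ b| ≤ (1/2 : ℝ) ^ n := by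
    intro n
    obtain ⟨δ, hδ, h⟩ := Metric.uniformContinuous_iff.mp huc ((1/2 : ℝ) ^ n) (by positivity)
    refine ⟨δ, hδ, fun a b hab => ?_⟩
    have := h (a := a) (b := b) (by rwa [Subtype.dist_eq])
    rw [Real.dist_eq] at this
    exact this.le
  choose δ hδpos hδ using key
  set K : ℕ → ℝ := fun n => (2 * C + 1) / δ n with hK
  have hKpos : ∀ n, 0 < K n := fun n => div_pos (by linarith) (hδpos n)
  -- the inf-convolutions
  set v : ℕ → X → ℝ := fun n x => ⨅ a : A, (f₀ a + K n * dist x (a : X)) with hv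
  have hbdd : ∀ n (x : X), BddBelow (Set.range fun a : A => f₀ a + K n * dist x (a : X)) := by
    intro n x
    refine ⟨-C, fun y hy => ?_⟩
    obtain ⟨a, rfl⟩ := hy
    have h1 : -C ≤ f₀ a := neg_le_of_abs_le (hC a)
    have h2 : 0 ≤ K n * dist x (a : X) := mul_nonneg (hKpos n).le dist_nonneg
    show -C ≤ f₀ a + K n * dist x (a : X)
    linarith
  have hv_le : ∀ n (a : A), v n a ≤ f₀ a := by
    intro n a
    have := ciInf_le (hbdd n a) a
    simpa using this
  have hv_ge : ∀ n (a : A), f₀ a - (1/2 : ℝ) ^ n ≤ v n a := by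
    intro n a
    refine le_ciInf fun b => ?_
    rcases lt_or_ge (dist (a : X) (b : X)) (δ n) with h | h
    · have h1 : |f₀ a - f₀ b| ≤ (1/2 : ℝ) ^ n := hδ n a b h
      have h2 : 0 ≤ K n * dist (a : X) (b : X) := mul_nonneg (hKpos n).le dist_nonneg
      have h3 := (abs_le.mp h1).2
      linarith
    · have h1 : 2 * C + 1 ≤ K n * dist (a : X) (b : X) := by
        rw [hK]
        rw [div_mul_eq_mul_div, le_div_iff₀ (hδpos n)]
        have : 0 ≤ 2 * C + 1 := by linarith
        calc (2 * C + 1) * δ n ≤ (2 * C + 1) * dist (a : X) (b : X) := by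
              exact mul_le_mul_of_nonneg_left h this
          _ = (2 * C + 1) * dist (a : X) (b : X) * 1 := by ring
          _ ≤ (2 * C + 1) * dist (a : X) (b : X) := by linarith
      have h2 : -C ≤ f₀ b := neg_le_of_abs_le (hC b)
      have h3 : f₀ a ≤ C := le_of_abs_le (hC a)
      have h4 : (0:ℝ) < (1/2 : ℝ) ^ n := by positivity
      linarith
  -- Lipschitz estimate for v n
  have hv_lip : ∀ n (x y : X), v n x - K n * dist x y ≤ v n y := by
    intro n x y
    refine le_ciInf fun b => ?_
    have h1 : v n x ≤ f₀ b + K n * dist x (b : X) := ciInf_le (hbdd n x) b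
    have h2 : dist x (b : X) ≤ dist x y + dist y (b : X) := dist_triangle _ _ _
    have h3 : K n * dist x (b : X) ≤ K n * (dist x y + dist y (b : X)) :=
      mul_le_mul_of_nonneg_left h2 (hKpos n).le
    show v n x - K n * dist x y ≤ f₀ b + K n * dist y (b : X)
    linarith
  have hv_lipW : ∀ n, LipschitzWith (K n).toNNReal (v n) := by
    intro n
    apply LipschitzWith.of_dist_le_mul
    intro x y
    rw [Real.dist_eq, Real.coe_toNNReal _ (hKpos n).le, abs_le]
    have h1 := hv_lip n x y
    have h2 := hv_lip n y x
    rw [dist_comm y x] at h2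
    constructor <;> linarith
  -- the telescoping pieces, clamped
  set h0 : X → ℝ := fun x => max (-(C + 1)) (min (C + 1) (v 0 x)) with hh0
  set w : ℕ → X → ℝ := fun n x =>
    max (-(3 * (1/2 : ℝ) ^ (n + 1))) (min (3 * (1/2 : ℝ) ^ (n + 1)) (v (n + 1) x - v n x)) with hw
  have hw_bound : ∀ n x, |w n x| ≤ 3 * (1/2 : ℝ) ^ (n + 1) :=
    fun n x => clamp_abs_le (by positivity) _
  have hh0_bound : ∀ x, |h0 x| ≤ C + 1 := fun x => clamp_abs_le (by linarith) _
  -- summability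
  have hgeo : Summable (fun n : ℕ => 3 * (1/2 : ℝ) ^ (n + 1)) := by
    have : Summable (fun n : ℕ => (1/2 : ℝ) ^ n) :=
      summable_geometric_of_lt_one (by norm_num) (by norm_num)
    simpa [pow_succ, mul_comm, mul_assoc, mul_left_comm] using (this.mul_left (3 * (1/2 : ℝ)))
  have hsum : ∀ x, Summable (fun n => w n x) := by
    intro x
    exact Summable.of_norm_bounded hgeo (fun n => by
      simpa [Real.norm_eq_abs] using hw_bound n x)
  have hgeo_tsum_le : ∀ N : ℕ, (∑' n : ℕ, 3 * (1/2 : ℝ) ^ (n + N + 1)) = 3 * (1/2 : ℝ) ^ N := by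
    intro N
    have h1 : (fun n : ℕ => 3 * (1/2 : ℝ) ^ (n + N + 1))
        = fun n : ℕ => (3 * (1/2 : ℝ) ^ (N + 1)) * (1/2 : ℝ) ^ n := by
      funext n; ring
    rw [h1, tsum_mul_left, tsum_geometric_of_lt_one (by norm_num) (by norm_num)]
    norm_num
    ring
  -- the extension
  set f : X → ℝ := fun x => h0 x + ∑' n, w n x with hf
  have tail_bound : ∀ (N : ℕ) (x : X),
      |f x - (h0 x + ∑ n ∈ range N, w n x)| ≤ 3 * (1/2 : ℝ) ^ N := by
    intro N x
    have hshift := Summable.sum_add_tsum_nat_add (f := fun n => w n x) N (hsum x)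
    have heq : f x - (h0 x + ∑ n ∈ range N, w n x) = ∑' n, w (n + N) x := by
      rw [hf]; simp only []; rw [← hshift]; ring
    rw [heq]
    have hsum2 : Summable fun n => ‖w (n + N) x‖ := by
      apply Summable.of_nonneg_of_le (fun n => norm_nonneg _)
        (fun n => ?_) ((hgeo.comp_injective (add_left_injective N)))
      simpa [Real.norm_eq_abs] using hw_bound (n + N) x
    calc |∑' n, w (n + N) x| ≤ ∑' n, ‖w (n + N) x‖ := norm_tsum_le_tsum_norm hsum2
      _ ≤ ∑' n : ℕ, 3 * (1/2 : ℝ) ^ (n + N + 1) := by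
          apply Summable.tsum_le_tsum _ hsum2 (by exact hgeo.comp_injective (add_left_injective N))
          intro n
          simpa [Real.norm_eq_abs] using hw_bound (n + N) x
      _ = 3 * (1/2 : ℝ) ^ N := hgeo_tsum_le N
  refine ⟨f, ?_, ?_, ?_⟩
  · -- uniform continuity
    -- partial sums are uniformly continuous
    have hF : ∀ N : ℕ, UniformContinuous (fun x => h0 x + ∑ n ∈ range N, w n x) := by
      intro N
      have hUCh0 : UniformContinuous h0 :=
        ((clamp_lipschitz (C + 1)).comp (hv_lipW 0)).uniformContinuous
      have hUCw : ∀ n, UniformContinuous (w n) := by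
        intro n
        have : w n = (fun t => max (-(3 * (1/2 : ℝ) ^ (n + 1)))
            (min (3 * (1/2 : ℝ) ^ (n + 1)) t)) ∘ (fun x => v (n + 1) x - v n x) := rfl
        rw [this]
        exact ((clamp_lipschitz _).uniformContinuous).comp
          (((hv_lipW (n + 1)).uniformContinuous).sub ((hv_lipW n).uniformContinuous))
      induction N with
      | zero => simpa using hUCh0
      | succ N ih =>
        have : (fun x => h0 x + ∑ n ∈ range (N + 1), w n x)
            = fun x => (h0 x + ∑ n ∈ range N, w n x) + w N x := by
          funext x; rw [Finset.sum_range_succ]; ring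
        rw [this]
        exact ih.add (hUCw N)
    rw [Metric.uniformContinuous_iff]
    intro ε hε
    obtain ⟨N, hN⟩ := exists_pow_lt_of_lt_one (x := ε / 9) (y := (1/2 : ℝ))
      (by linarith) (by norm_num)
    obtain ⟨d, hd, hdimp⟩ := Metric.uniformContinuous_iff.mp (hF N) (ε / 3) (by linarith)
    refine ⟨d, hd, fun {x y} hxy => ?_⟩
    have h1 := tail_bound N x
    have h2 := tail_bound N y
    have h3 := hdimp hxy
    rw [Real.dist_eq] at h3 ⊢
    have habs : |f x - f y| ≤ |f x - (h0 x + ∑ n ∈ range N, w n x)|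
        + |(h0 x + ∑ n ∈ range N, w n x) - (h0 y + ∑ n ∈ range N, w n y)|
        + |(h0 y + ∑ n ∈ range N, w n y) - f y| := by
      have := abs_sub_le (f x) (h0 x + ∑ n ∈ range N, w n x) (f y)
      have := abs_sub_le (h0 x + ∑ n ∈ range N, w n x) (h0 y + ∑ n ∈ range N, w n y) (f y)
      calc |f x - f y| ≤ _ := abs_sub_le (f x) (h0 x + ∑ n ∈ range N, w n x) (f y)
        _ ≤ _ := by
            have := abs_sub_le (h0 x + ∑ n ∈ range N, w n x)
              (h0 y + ∑ n ∈ range N, w n y) (f y)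
            linarith
    have h4 : |(h0 y + ∑ n ∈ range N, w n y) - f y| = |f y - (h0 y + ∑ n ∈ range N, w n y)| :=
      abs_sub_comm _ _
    have h5 : 3 * (1/2 : ℝ) ^ N ≤ 3 * (ε / 9) := by nlinarith [hN]
    rw [h4] at habs
    calc |f x - f y| ≤ _ := habs
      _ < ε := by linarith
  · -- boundedness
    refine ⟨C + 4, fun x => ?_⟩
    have h1 := hh0_bound x
    have h2 : |∑' n, w n x| ≤ 3 := by
      have hsum2 : Summable fun n => ‖w n x‖ :=
        Summable.of_nonneg_of_le (fun n => norm_nonneg _)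
          (fun n => by simpa [Real.norm_eq_abs] using hw_bound n x) hgeo
      calc |∑' n, w n x| ≤ ∑' n, ‖w n x‖ := norm_tsum_le_tsum_norm hsum2
        _ ≤ ∑' n : ℕ, 3 * (1/2 : ℝ) ^ (n + 0 + 1) := by
            apply Summable.tsum_le_tsum _ hsum2 (by simpa using hgeo)
            intro n
            simpa [Real.norm_eq_abs] using hw_bound n x
        _ = 3 * (1/2 : ℝ) ^ 0 := hgeo_tsum_le 0
        _ = 3 := by norm_num
    have := abs_add_le (h0 x) (∑' n, w n x)
    rw [hf]
    calc |h0 x + ∑' n, w n x| ≤ |h0 x| + |∑' n, w n x| := abs_add_le _ _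
      _ ≤ C + 4 := by linarith
  · -- restriction
    intro a
    -- on A the clamps are inactive
    have hv0a : |v 0 (a : X)| ≤ C + 1 := by
      have h1 := hv_le 0 a
      have h2 := hv_ge 0 a
      have h3 := hC a
      rw [abs_le] at h3 ⊢
      simp only [pow_zero] at h2
      constructor <;> linarith
    have hh0a : h0 (a : X) = v 0 (a : X) := clamp_eq_self hv0a
    have hwa : ∀ n, w n (a : X) = v (n + 1) (a : X) - v n (a : X) := by
      intro n
      apply clamp_eq_self
      have h1 := hv_le (n + 1) a
      have h2 := hv_ge (n + 1) a
      have h3 := hv_le n a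
      have h4 := hv_ge n a
      have h5 : ((1/2 : ℝ) ^ (n + 1)) + (1/2 : ℝ) ^ n = 3 * (1/2 : ℝ) ^ (n + 1) := by
        rw [pow_succ]; ring
      rw [abs_le]
      constructor <;> nlinarith
    -- partial sums telescope
    have hps : ∀ N : ℕ, (∑ n ∈ range N, w n (a : X)) = v N (a : X) - v 0 (a : X) := by
      intro N
      calc (∑ n ∈ range N, w n (a : X))
          = ∑ n ∈ range N, (v (n + 1) (a : X) - v n (a : X)) := by
            exact Finset.sum_congr rfl fun n _ => hwa n
        _ = v N (a : X) - v 0 (a : X) := Finset.sum_range_sub (fun n => v n (a : X)) N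
    have hlim1 : Tendsto (fun N => ∑ n ∈ range N, w n (a : X)) atTop
        (nhds (∑' n, w n (a : X))) := (hsum (a : X)).hasSum.tendsto_sum_nat
    have hlim2 : Tendsto (fun N => ∑ n ∈ range N, w n (a : X)) atTop
        (nhds (f₀ a - v 0 (a : X))) := by
      simp only [hps]
      have hvN : Tendsto (fun N => v N (a : X) - f₀ a) atTop (nhds 0) := by
        refine squeeze_zero_norm (fun N => ?_)
          (tendsto_pow_atTop_nhds_zero_of_lt_one (r := (1/2 : ℝ)) (by norm_num) (by norm_num))
        rw [Real.norm_eq_abs, abs_le]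
        have h1 := hv_le N a
        have h2 := hv_ge N a
        constructor <;> linarith
      have := hvN.add_const (f₀ a - v 0 (a : X))
      convert this using 2 with N
      · ring
      · ring
    have : (∑' n, w n (a : X)) = f₀ a - v 0 (a : X) := tendsto_nhds_unique hlim1 hlim2
    rw [hf]
    simp only []
    rw [hh0a, this]
    ring
end

section
/- Let X be the subset of ℓ² given by X = B ∪ {(1 + m/n)·e_n : n ∈ ℕ, m = 1, …, n}, where B is the closed unit ball of ℓ² and (e_n) is the standard orthonormal basis. Then X, with the metric induced from ℓ², is a Bourbaki-bounded metric space, i.e., every uniformly continuous real-valued function on X is bounded. -/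
/-- The space `ℓ²` of square-summable real sequences. -/
noncomputable abbrev ellTwo : Type := lp (fun _ : ℕ => ℝ) 2

/-- The `n`-th standard basis vector of `ℓ²`. -/
noncomputable def e (n : ℕ) : ellTwo := lp.single 2 n (1 : ℝ)

/-- The subset `X = B ∪ {(1 + m/n) e_n : n ∈ ℕ, 1 ≤ m ≤ n}` of `ℓ²`, where `B`
is the closed unit ball. -/
noncomputable def XSet : Set ellTwo :=
  Metric.closedBall 0 1 ∪
    {z : ellTwo | ∃ n m : ℕ, 1 ≤ m ∧ m ≤ n ∧ z = (1 + (m : ℝ) / n) • e n}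

lemma norm_e (n : ℕ) : ‖e n‖ = 1 := by
  have := lp.norm_single (p := 2) (E := fun _ : ℕ => ℝ)
    (by norm_num) n (1:ℝ)
  simpa [e] using this

lemma mem_X (n k : ℕ) (hk : k ≤ n) : (1 + (k : ℝ)/n) • e n ∈ XSet := by
  rcases Nat.eq_zero_or_pos k with h0 | h1
  · left
    subst h0
    simp [Metric.mem_closedBall, dist_eq_norm, norm_smul, norm_e]
  · right
    exact ⟨n, k, h1, hk, rfl⟩

lemma ball_mem_X {x : ellTwo} (hx : ‖x‖ ≤ 1) : x ∈ XSet := by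
  left; simpa [Metric.mem_closedBall, dist_eq_norm] using hx

lemma chain_bound {δ : ℝ} {f : XSet → ℝ}
    (hf : ∀ x y : XSet, dist x y < δ → |f x - f y| < 1)
    (p : ℕ → XSet) (K : ℕ) (hs : ∀ j < K, dist (p j) (p (j+1)) < δ) :
    |f (p K) - f (p 0)| ≤ K := by
  induction K with
  | zero => simp
  | succ k ih =>
    have h1 := ih (fun j hj => hs j (by omega))
    have h2 := hf (p (k+1)) (p k) (by rw [dist_comm]; exact hs k (by omega))
    have := abs_sub_le (f (p (k+1))) (f (p k)) (f (p 0))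
    push_cast
    linarith

/-- `X`, with the metric induced from `ℓ²`, is Bourbaki-bounded: every
uniformly continuous real-valued function on `X` is bounded. -/
theorem XSet_bourbakiBounded :
    ∀ f : XSet → ℝ, UniformContinuous f → ∃ C : ℝ, ∀ z : XSet, |f z| ≤ C := by
  intro f hf
  obtain ⟨δ, hδ, hfd⟩ := Metric.uniformContinuous_iff.mp hf 1 one_pos
  have hfd' : ∀ x y : XSet, dist x y < δ → |f x - f y| < 1 := by
    intro x y h
    simpa [Real.dist_eq] using hfd h
  -- N : steps for the ball
  set N : ℕ := ⌈1/δ⌉₊ + 1 with hN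
  have hNpos : 0 < N := by positivity
  have hNδ : 1/(N:ℝ) < δ := by
    rw [div_lt_iff₀ (by exact_mod_cast hNpos)]
    have h1 : (1:ℝ)/δ ≤ ⌈1/δ⌉₊ := Nat.le_ceil _
    have : (1:ℝ)/δ < N := by
      rw [hN]; push_cast; linarith
    calc (1:ℝ) = δ * (1/δ) := by field_simp
    _ < δ * N := by
      apply mul_lt_mul_of_pos_left this hδ
  -- bound on the ball part via chains
  have zero_mem : (0 : ellTwo) ∈ XSet := ball_mem_X (by simp)
  have ball_bound : ∀ z : XSet, ‖(z : ellTwo)‖ ≤ 1 → |f z - f ⟨0, zero_mem⟩| ≤ N := by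
    intro z hz
    set p : ℕ → XSet := fun j =>
      ⟨(((min j N : ℕ) : ℝ)/N) • (z : ellTwo), ball_mem_X (by
        rw [norm_smul]
        have h1 : ‖(((min j N : ℕ) : ℝ)/N)‖ ≤ 1 := by
          rw [Real.norm_eq_abs, abs_of_nonneg (by positivity)]
          rw [div_le_one (by exact_mod_cast hNpos)]
          exact_mod_cast min_le_right j N
        calc ‖(((min j N : ℕ) : ℝ)/N)‖ * ‖(z:ellTwo)‖ ≤ 1 * 1 :=
          mul_le_mul h1 hz (norm_nonneg _) zero_le_one
        _ = 1 := one_mul 1)⟩ with hp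
    have h0 : p 0 = ⟨0, zero_mem⟩ := by
      simp [hp]
    have hK : p N = z := by
      apply Subtype.ext
      simp [hp, div_self (show (N:ℝ) ≠ 0 by exact_mod_cast hNpos.ne')]
    have hsteps : ∀ j < N, dist (p j) (p (j+1)) < δ := by
      intro j hj
      have : dist (p j) (p (j+1)) = ‖(((min j N : ℕ):ℝ)/N) • (z:ellTwo) - (((min (j+1) N : ℕ):ℝ)/N) • (z:ellTwo)‖ := by
        simp only [Subtype.dist_eq, dist_eq_norm, hp]
      rw [this, ← sub_smul, norm_smul]
      have hm1 : min j N = j := min_eq_left hj.le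
      have hm2 : min (j+1) N = j+1 := min_eq_left hj
      rw [hm1, hm2]
      have : ((j:ℝ)/N - ((j+1:ℕ):ℝ)/N) = -(1/N) := by push_cast; field_simp; ring
      rw [this]
      calc ‖(-(1/(N:ℝ)))‖ * ‖(z:ellTwo)‖ ≤ (1/N) * 1 := by
            apply mul_le_mul _ hz (norm_nonneg _) (by positivity)
            rw [norm_neg, Real.norm_eq_abs, abs_of_nonneg (by positivity)]
      _ = 1/N := mul_one _
      _ < δ := hNδ
    have := chain_bound hfd' p N hsteps
    rw [h0, hK] at this
    exact this
  -- parameters for the spike chains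
  set n₀ : ℕ := ⌈4/δ⌉₊ with hn₀
  set K₀ : ℕ := ⌈4/δ⌉₊ + 1 with hK₀
  -- bound on the finitely many small spikes
  set F : Set XSet :=
    Subtype.val ⁻¹' ((fun p : ℕ × ℕ => (1 + (p.2:ℝ)/p.1) • e p.1) '' (Set.Iic n₀ ×ˢ Set.Iic n₀))
    with hF
  have hFfin : F.Finite :=
    (((Set.finite_Iic n₀).prod (Set.finite_Iic n₀)).image _).preimage
      (Set.injOn_of_injective Subtype.val_injective)
  obtain ⟨C₁, hC₁⟩ : ∃ C₁, ∀ z ∈ F, |f z| ≤ C₁ := by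
    obtain ⟨C₁, hub⟩ := (hFfin.image (fun z => |f z|)).bddAbove
    exact ⟨C₁, fun z hz => hub (Set.mem_image_of_mem _ hz)⟩
  -- bound on big spikes via chains
  have spike_bound : ∀ (n m : ℕ), n₀ < n → 1 ≤ m → m ≤ n →
      ∀ (hz : (1 + (m:ℝ)/n) • e n ∈ XSet),
      |f ⟨_, hz⟩ - f ⟨0, zero_mem⟩| ≤ N + K₀ := by
    intro n m hn hm1 hmn hz
    have hnpos : 0 < n := lt_of_le_of_lt (Nat.zero_le _) hn
    have hnR : (0:ℝ) < n := by exact_mod_cast hnpos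
    have hnδ : (4:ℝ) < n * δ := by
      have h1 : (4:ℝ)/δ ≤ n₀ := Nat.le_ceil _
      have h2 : (n₀:ℝ) < n := by exact_mod_cast hn
      have : (4:ℝ)/δ < n := lt_of_le_of_lt h1 h2
      calc (4:ℝ) = (4/δ) * δ := by field_simp
      _ < n * δ := by exact mul_lt_mul_of_pos_right this hδ
    set s : ℕ := ⌊(n:ℝ) * δ / 2⌋₊ with hs
    have hs_le : (s:ℝ) ≤ n * δ / 2 := Nat.floor_le (by positivity)
    have hs_gt : (n:ℝ) * δ / 2 - 1 < s := by
      have := Nat.lt_floor_add_one ((n:ℝ) * δ / 2)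
      linarith
    have hs_ge : (n:ℝ) * δ / 4 ≤ s := by linarith
    have hKs : (m:ℝ) ≤ (K₀:ℝ) * s := by
      have h1 : (4:ℝ)/δ ≤ K₀ := by
        have := Nat.le_ceil ((4:ℝ)/δ)
        rw [hK₀]; push_cast; linarith
      have h2 : (4:ℝ)/δ * ((n:ℝ) * δ / 4) = n := by field_simp
      have h3 : (n:ℝ) ≤ K₀ * s := by
        calc (n:ℝ) = (4/δ) * ((n:ℝ) * δ / 4) := h2.symm
        _ ≤ (K₀:ℝ) * s := by
            apply mul_le_mul h1 hs_ge (by positivity) (by positivity)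
      have h4 : (m:ℝ) ≤ n := by exact_mod_cast hmn
      linarith
    have hKsN : m ≤ K₀ * s := by
      exact_mod_cast hKs
    set q : ℕ → XSet := fun j =>
      ⟨(1 + ((min (j*s) m : ℕ):ℝ)/n) • e n,
        mem_X n _ (le_trans (min_le_right _ _) hmn)⟩ with hq
    have hq0 : (q 0 : ellTwo) = e n := by simp [hq]
    have hqK : q K₀ = ⟨_, hz⟩ := by
      apply Subtype.ext
      simp only [hq]
      rw [min_eq_right hKsN]
    have hsteps : ∀ j < K₀, dist (q j) (q (j+1)) < δ := by
      intro j hj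
      have hdq : dist (q j) (q (j+1)) =
          ‖(1 + ((min (j*s) m : ℕ):ℝ)/n) • e n - (1 + ((min ((j+1)*s) m : ℕ):ℝ)/n) • e n‖ := by
          simp only [Subtype.dist_eq, dist_eq_norm, hq]
      rw [hdq, ← sub_smul, norm_smul, norm_e, mul_one]
      have hexp : (j+1)*s = j*s + s := by ring
      have hd : min ((j+1)*s) m ≤ min (j*s) m + s := by omega
      have hmono : min (j*s) m ≤ min ((j+1)*s) m := by omega
      have ha1 : ((min (j*s) m : ℕ):ℝ) ≤ ((min ((j+1)*s) m : ℕ):ℝ) := by exact_mod_cast hmono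
      have ha2 : ((min ((j+1)*s) m : ℕ):ℝ) ≤ ((min (j*s) m : ℕ):ℝ) + s := by exact_mod_cast hd
      have hrw : (1 + ((min (j*s) m : ℕ):ℝ)/n) - (1 + ((min ((j+1)*s) m : ℕ):ℝ)/n)
          = (((min (j*s) m : ℕ):ℝ) - ((min ((j+1)*s) m : ℕ):ℝ))/n := by ring
      rw [Real.norm_eq_abs, hrw, abs_div, abs_of_pos hnR, abs_sub_comm,
        abs_of_nonneg (by linarith)]
      have hfin : (((min ((j+1)*s) m : ℕ):ℝ) - ((min (j*s) m : ℕ):ℝ))/n ≤ (s:ℝ)/n := by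
        gcongr
        linarith
      calc (((min ((j+1)*s) m : ℕ):ℝ) - ((min (j*s) m : ℕ):ℝ))/n ≤ (s:ℝ)/n := hfin
      _ ≤ ((n:ℝ) * δ / 2)/n := by gcongr
      _ = δ/2 := by field_simp
      _ < δ := by linarith
    have hchain := chain_bound hfd' q K₀ hsteps
    rw [hqK] at hchain
    have he_mem : (e n : ellTwo) ∈ XSet := ball_mem_X (le_of_eq (norm_e n))
    have hq0' : q 0 = ⟨e n, he_mem⟩ := Subtype.ext hq0
    rw [hq0'] at hchain
    have hball := ball_bound ⟨e n, he_mem⟩ (le_of_eq (norm_e n))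
    have := abs_sub_le (f ⟨_, hz⟩) (f ⟨e n, he_mem⟩) (f ⟨0, zero_mem⟩)
    push_cast
    push_cast at hchain hball
    linarith
  -- conclude
  refine ⟨max C₁ (|f ⟨0, zero_mem⟩| + N + K₀), fun z => ?_⟩
  rcases z.2 with hb | ⟨n, m, hm1, hmn, hzeq⟩
  · have h1 : ‖(z:ellTwo)‖ ≤ 1 := by
      simpa [Metric.mem_closedBall, dist_eq_norm] using hb
    have h2 := ball_bound z h1
    have := abs_sub_abs_le_abs_sub (f z) (f ⟨0, zero_mem⟩)
    have hN1 : (0:ℝ) ≤ K₀ := by positivity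
    refine le_trans ?_ (le_max_right _ _)
    have : |f z| ≤ |f ⟨0, zero_mem⟩| + N := by
      have := abs_sub_le (f z) (f ⟨0, zero_mem⟩) 0
      simp only [sub_zero] at this
      linarith [abs_sub_le (f z) (f ⟨0, zero_mem⟩) 0, h2,
        abs_sub_abs_le_abs_sub (f z) (f ⟨0, zero_mem⟩)]
    linarith
  · rcases le_or_gt n n₀ with hn | hn
    · have hzF : z ∈ F := by
        rw [hF]
        refine Set.mem_preimage.mpr ⟨(n, m), ⟨hn, le_trans hmn hn⟩, ?_⟩
        exact hzeq.symm
      exact le_trans (hC₁ z hzF) (le_max_left _ _)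
    · have hz' : (1 + (m:ℝ)/n) • e n ∈ XSet := hzeq ▸ z.2
      have hzz : z = ⟨_, hz'⟩ := Subtype.ext hzeq
      have h2 := spike_bound n m hn hm1 hmn hz'
      rw [← hzz] at h2
      refine le_trans ?_ (le_max_right _ _)
      have := abs_sub_le (f z) (f ⟨0, zero_mem⟩) 0
      simp only [sub_zero] at this
      push_cast at h2 ⊢
      linarith
end

section
/- A metric space (X,d) is Bourbaki-bounded (every uniformly continuous real-valued function on X is bounded) if and only if X is bounded with respect to every metric d' on X that is uniformly equivalent to d (i.e., such that the identity maps (X,d) → (X,d') and (X,d') → (X,d) are both uniformly continuous). -/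
/-- Auxiliary metric `d'(x,y) = d(x,y) + |f x - f y|`. -/
def bourbakiAuxMetric {X : Type*} [MetricSpace X] (f : X → ℝ) : MetricSpace X where
  dist x y := dist x y + |f x - f y|
  dist_self x := by simp
  dist_comm x y := by rw [dist_comm, abs_sub_comm]
  dist_triangle x y z := by
    have h1 := dist_triangle x y z
    have h2 := abs_sub_le (f x) (f y) (f z)
    linarith
  eq_of_dist_eq_zero := by
    intro x y h
    have hd : dist x y ≤ 0 := by
      have := abs_nonneg (f x - f y); linarith
    exact eq_of_dist_eq_zero (le_antisymm hd dist_nonneg)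

/-- A metric space `(X, d)` is Bourbaki-bounded (every uniformly continuous
real function is bounded) iff `X` has finite diameter with respect to every
metric `d'` on `X` uniformly equivalent to `d` (i.e. the identity map is
uniformly continuous in both directions). -/
theorem bourbakiBounded_iff_bounded_uniformly_equivalent {X : Type*} [m : MetricSpace X] :
    (∀ f : X → ℝ, UniformContinuous f → ∃ C : ℝ, ∀ x : X, |f x| ≤ C) ↔
    (∀ m' : MetricSpace X,
      @UniformContinuous X X m.toUniformSpace m'.toUniformSpace id →
      @UniformContinuous X X m'.toUniformSpace m.toUniformSpace id →
      ∃ C : ℝ, ∀ x y : X, @dist X m'.toDist x y ≤ C) := by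
  constructor
  · intro hBB m' h1 h2
    rcases isEmpty_or_nonempty X with hX | hX
    · exact ⟨0, fun x => (hX.false x).elim⟩
    · obtain ⟨x₀⟩ := hX
      have hf' : @UniformContinuous X ℝ m'.toUniformSpace _
          (fun x => @dist X m'.toDist x x₀) :=
        @UniformContinuous.dist X X m'.toPseudoMetricSpace m'.toUniformSpace
          id (fun _ => x₀)
          (@uniformContinuous_id X m'.toUniformSpace)
          (@uniformContinuous_const X X m'.toUniformSpace m'.toUniformSpace x₀)
      have hf : @UniformContinuous X ℝ m.toUniformSpace _
          (fun x => @dist X m'.toDist x x₀) :=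
        @UniformContinuous.comp X X ℝ m.toUniformSpace m'.toUniformSpace _
          _ id hf' h1
      obtain ⟨C, hC⟩ := hBB _ hf
      refine ⟨C + C, fun x y => ?_⟩
      have hx' : @dist X m'.toDist x x₀ ≤ C := (abs_le.mp (hC x)).2
      have hy' : @dist X m'.toDist y x₀ ≤ C := (abs_le.mp (hC y)).2
      have htri : @dist X m'.toDist x y ≤
          @dist X m'.toDist x x₀ + @dist X m'.toDist x₀ y :=
        @dist_triangle X m'.toPseudoMetricSpace x x₀ y
      have hcomm : @dist X m'.toDist x₀ y = @dist X m'.toDist y x₀ :=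
        @dist_comm X m'.toPseudoMetricSpace x₀ y
      linarith
  · intro hB f hf
    have h1 : @UniformContinuous X X m.toUniformSpace
        (bourbakiAuxMetric f).toUniformSpace id := by
      rw [@Metric.uniformContinuous_iff X X m.toPseudoMetricSpace
        (bourbakiAuxMetric f).toPseudoMetricSpace]
      intro ε hε
      obtain ⟨δ₁, hδ₁, hδ₁'⟩ := Metric.uniformContinuous_iff.mp hf (ε / 2) (by linarith)
      refine ⟨min δ₁ (ε / 2), lt_min hδ₁ (by linarith), fun {a b} hab => ?_⟩
      have h₁ : dist a b < δ₁ := lt_of_lt_of_le hab (min_le_left _ _)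
      have h₂ : dist a b < ε / 2 := lt_of_lt_of_le hab (min_le_right _ _)
      have h₃ : |f a - f b| < ε / 2 := by
        have := hδ₁' h₁; rwa [Real.dist_eq] at this
      show dist a b + |f a - f b| < ε
      linarith
    have h2 : @UniformContinuous X X (bourbakiAuxMetric f).toUniformSpace
        m.toUniformSpace id := by
      rw [@Metric.uniformContinuous_iff X X (bourbakiAuxMetric f).toPseudoMetricSpace
        m.toPseudoMetricSpace]
      intro ε hε
      refine ⟨ε, hε, fun {a b} hab => ?_⟩
      have h3 : dist a b + |f a - f b| < ε := hab
      have h4 := abs_nonneg (f a - f b)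
      show dist (id a) (id b) < ε
      simpa using by linarith
    obtain ⟨C, hC⟩ := hB (bourbakiAuxMetric f) h1 h2
    rcases isEmpty_or_nonempty X with hX | hX
    · exact ⟨0, fun x => (hX.false x).elim⟩
    · obtain ⟨x₀⟩ := hX
      refine ⟨C + |f x₀|, fun x => ?_⟩
      have h : dist x x₀ + |f x - f x₀| ≤ C := hC x x₀
      have hd : dist x x₀ ≥ 0 := dist_nonneg
      have habs : |f x| ≤ |f x - f x₀| + |f x₀| := by
        have := abs_add_le (f x - f x₀) (f x₀); simpa using this
      linarith
end

section
/- A metric space (X,d) is Bourbaki-bounded (every uniformly continuous real-valued function on X is bounded) if and only if every countable subset B ⊆ X is a Bourbaki-bounded subset of X, i.e., every uniformly continuous real-valued function on X is bounded on B. -/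
/-- A metric space `X` is Bourbaki-bounded iff every countable subset of `X`
is a Bourbaki-bounded subset of `X`. -/
theorem bourbakiBounded_iff_countable_subsets {X : Type*} [MetricSpace X] :
    (∀ f : X → ℝ, UniformContinuous f → ∃ C : ℝ, ∀ x : X, |f x| ≤ C) ↔
    (∀ B : Set X, B.Countable → IsBourbakiBoundedSubset B) := by
  constructor
  · intro h B _ f hf
    obtain ⟨C, hC⟩ := h f hf
    exact ⟨C, fun x _ => hC x⟩
  · intro h f hf
    by_contra hc
    push_neg at hc
    choose g hg using fun n : ℕ => hc (n : ℝ)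
    obtain ⟨C, hC⟩ := h (Set.range g) (Set.countable_range g) f hf
    obtain ⟨n, hn⟩ := exists_nat_gt C
    exact absurd (hC (g n) ⟨n, rfl⟩) (by linarith [hg n])
end

section
/- A metric space (X,d) is Bourbaki-bounded (every uniformly continuous real-valued function on X is bounded) if and only if X is finitely chainable: for every γ > 0 there exist M₁, M₂ ∈ ℕ and points x₁, …, x_{M₁} ∈ X such that X = {x₁, …, x_{M₁}}^{M₂, γ}, where for A ⊆ X one defines A^{1,γ} = {x ∈ X : d(x,A) ≤ γ} and inductively A^{k,γ} = {x ∈ X : d(x, A^{k-1,γ}) ≤ γ}. -/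
/-- The iterated `γ`-enlargements of a set: `enlarge γ A 0 = A` and
`enlarge γ A (k+1) = {x : d(x, enlarge γ A k) ≤ γ}`, where the distance to a
set is computed in `[0,∞]` (so it is `∞` for the empty set). -/
def enlarge {X : Type*} [MetricSpace X] (γ : ℝ) (A : Set X) : ℕ → Set X
  | 0 => A
  | k + 1 => {x : X | EMetric.infEdist x (enlarge γ A k) ≤ ENNReal.ofReal γ}

namespace BBProof

variable {X : Type*} [MetricSpace X]

lemma mem_enlarge_succ {γ : ℝ} {A : Set X} {k : ℕ} {x : X} :
    x ∈ enlarge γ A (k+1) ↔ EMetric.infEdist x (enlarge γ A k) ≤ ENNReal.ofReal γ :=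
  Iff.rfl

lemma step_mem {γ : ℝ} {A : Set X} {k : ℕ} {x y : X}
    (hy : y ∈ enlarge γ A k) (hd : dist x y ≤ γ) : x ∈ enlarge γ A (k+1) := by
  rw [mem_enlarge_succ]
  calc EMetric.infEdist x (enlarge γ A k) ≤ edist x y :=
        EMetric.infEdist_le_edist_of_mem hy
    _ = ENNReal.ofReal (dist x y) := by rw [edist_dist]
    _ ≤ ENNReal.ofReal γ := ENNReal.ofReal_le_ofReal hd

lemma enlarge_subset_succ {γ : ℝ} (hγ : 0 ≤ γ) (A : Set X) (k : ℕ) :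
    enlarge γ A k ⊆ enlarge γ A (k+1) := fun x hx =>
  step_mem hx (by simpa using hγ)

lemma enlarge_mono_nat {γ : ℝ} (hγ : 0 ≤ γ) (A : Set X) {k l : ℕ} (h : k ≤ l) :
    enlarge γ A k ⊆ enlarge γ A l := by
  induction l with
  | zero => rw [Nat.le_zero.mp h]
  | succ l IH =>
    rcases Nat.lt_or_ge k (l+1) with h' | h'
    · exact (IH (Nat.lt_succ_iff.mp h')).trans (enlarge_subset_succ hγ A l)
    · rw [le_antisymm h h']

lemma enlarge_mono_set {γ : ℝ} {A B : Set X} (h : A ⊆ B) (k : ℕ) :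
    enlarge γ A k ⊆ enlarge γ B k := by
  induction k with
  | zero => exact h
  | succ k IH =>
    intro x hx
    rw [mem_enlarge_succ] at hx ⊢
    exact le_trans (EMetric.infEdist_anti IH) hx

lemma dist_le_sum_Ico (z : ℕ → X) {j n : ℕ} (h : j ≤ n) :
    dist (z j) (z n) ≤ ∑ i ∈ Finset.Ico j n, dist (z i) (z (i+1)) := by
  have h2 := dist_le_range_sum_dist (fun i => z (j + i)) (n - j)
  rw [Finset.sum_Ico_eq_sum_range]
  simp only [Nat.add_zero, Nat.add_sub_cancel' h] at h2
  simpa [Nat.add_assoc] using h2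

lemma compress {γ : ℝ} (hγ : 0 < γ) :
    ∀ n : ℕ, ∀ z : ℕ → X, (∀ i < n, dist (z i) (z (i+1)) ≤ γ) →
      ∀ m : ℕ, 2 * (∑ i ∈ Finset.range n, dist (z i) (z (i+1))) ≤ γ * m →
      z n ∈ enlarge γ ({z 0} : Set X) (m + 1) := by
  intro n
  induction n using Nat.strong_induction_on with
  | _ n IH =>
  intro z hz m hm
  classical
  have hPn : (∑ i ∈ Finset.Ico n n, dist (z i) (z (i+1))) ≤ γ := by
    simp [le_of_lt hγ]
  have hex : ∃ j, (∑ i ∈ Finset.Ico j n, dist (z i) (z (i+1))) ≤ γ := ⟨n, hPn⟩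
  set j := Nat.find hex with hjdef
  have hj : (∑ i ∈ Finset.Ico j n, dist (z i) (z (i+1))) ≤ γ := Nat.find_spec hex
  have hjn : j ≤ n := Nat.find_min' hex hPn
  have hdjn : dist (z j) (z n) ≤ γ := le_trans (dist_le_sum_Ico z hjn) hj
  rcases Nat.eq_zero_or_pos j with hj0 | hj0
  · rw [hj0] at hdjn
    have h1 : z n ∈ enlarge γ ({z 0} : Set X) 1 :=
      step_mem (Set.mem_singleton _) (by rwa [dist_comm])
    exact enlarge_mono_nat (le_of_lt hγ) _ (by omega) h1
  · obtain ⟨jj, hjj⟩ : ∃ jj, j = jj + 1 := ⟨j - 1, by omega⟩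
    have hTjj : ¬ (∑ i ∈ Finset.Ico jj n, dist (z i) (z (i+1))) ≤ γ :=
      Nat.find_min hex (by omega)
    push_neg at hTjj
    have hjltn : j < n := by
      rcases Nat.lt_or_ge j n with h | h
      · exact h
      · exfalso
        have hjn' : j = n := le_antisymm hjn h
        have hjjn : jj + 1 = n := by omega
        have hsum : (∑ i ∈ Finset.Ico jj n, dist (z i) (z (i+1)))
            = dist (z jj) (z (jj+1)) := by
          rw [← hjjn]
          simp
        rw [hsum] at hTjj
        exact absurd (hz jj (by omega)) (not_le.mpr hTjj)
    have hTle : (∑ i ∈ Finset.Ico jj n, dist (z i) (z (i+1)))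
        ≤ ∑ i ∈ Finset.range n, dist (z i) (z (i+1)) := by
      rw [← Finset.sum_range_add_sum_Ico _ (show jj ≤ n by omega)]
      have : 0 ≤ ∑ i ∈ Finset.range jj, dist (z i) (z (i+1)) :=
        Finset.sum_nonneg fun i _ => dist_nonneg
      linarith
    have hm3 : (2:ℝ) < (m:ℝ) := by
      have h1 : γ * 2 < γ * m := by linarith
      exact (mul_lt_mul_iff_right₀ hγ).mp h1
    have hm3' : 3 ≤ m := by
      have : 2 < m := by exact_mod_cast hm3
      omega
    obtain ⟨k, rfl⟩ : ∃ k, m = k + 3 := ⟨m - 3, by omega⟩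
    have hsplit := Finset.sum_range_add_sum_Ico
      (fun i => dist (z i) (z (i+1))) (show jj ≤ n by omega)
    have hpre : 2 * (∑ i ∈ Finset.range jj, dist (z i) (z (i+1)))
        ≤ γ * ((k+1 : ℕ) : ℝ) := by
      push_cast at hm ⊢
      linarith
    have h1 : z jj ∈ enlarge γ ({z 0} : Set X) ((k+1) + 1) :=
      IH jj (by omega) z (fun i hi => hz i (by omega)) (k+1) hpre
    have h2 : z (jj+1) ∈ enlarge γ ({z 0} : Set X) (k+3) := by
      have hd : dist (z (jj+1)) (z jj) ≤ γ := by
        rw [dist_comm]; exact hz jj (by omega)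
      exact step_mem h1 hd
    have h3 : z n ∈ enlarge γ ({z 0} : Set X) (k+4) := by
      have hd : dist (z n) (z (jj+1)) ≤ γ := by
        rw [dist_comm, ← hjj]; exact hdjn
      exact step_mem h2 hd
    exact h3

def Rel (γ : ℝ) (x y : X) : Prop :=
  ∃ n, ∃ z : ℕ → X, z 0 = x ∧ z n = y ∧ ∀ i < n, dist (z i) (z (i+1)) ≤ γ

lemma rel_refl (γ : ℝ) (x : X) : Rel γ x x :=
  ⟨0, fun _ => x, rfl, rfl, fun i hi => absurd hi (by omega)⟩

lemma rel_of_dist_le {γ : ℝ} {x y : X} (h : dist x y ≤ γ) : Rel γ x y := by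
  refine ⟨1, fun i => if i = 0 then x else y, by simp, by simp, ?_⟩
  intro i hi
  have : i = 0 := by omega
  subst this
  simpa using h

lemma rel_symm {γ : ℝ} {x y : X} : Rel γ x y → Rel γ y x := by
  rintro ⟨n, z, h0, hn, hs⟩
  refine ⟨n, fun i => z (n - i), by simp [hn], by simp [h0], ?_⟩
  intro i hi
  have h1 : n - i = (n - (i+1)) + 1 := by omega
  simp only []
  rw [dist_comm, h1]
  exact hs _ (by omega)

lemma rel_trans {γ : ℝ} {x y c : X} : Rel γ x y → Rel γ y c → Rel γ x c := by
  rintro ⟨n, z, hz0, hzn, hzs⟩ ⟨m, w, hw0, hwm, hws⟩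
  refine ⟨n + m, fun i => if i ≤ n then z i else w (i - n), ?_, ?_, ?_⟩
  · simp [hz0]
  · by_cases h : m = 0
    · subst h
      simp only [Nat.add_zero, le_refl, if_pos]
      rw [hzn, ← hw0, ← hwm]
    · have hle : ¬ (n + m ≤ n) := by omega
      simp only [hle, if_neg, Nat.add_sub_cancel_left, hwm]
      simp [hwm]
  · intro i hi
    rcases lt_trichotomy i n with h | h | h
    · have h1 : i ≤ n := h.le
      have h2 : i + 1 ≤ n := h
      simpa [h1, h2] using hzs i h
    · subst h
      have h1 : i ≤ i := le_refl i
      have h2 : ¬ (i + 1 ≤ i) := by omega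
      simp only [h1, if_pos, h2, if_neg, Nat.add_sub_cancel_left]
      rw [hzn, ← hw0]
      exact hws 0 (by omega)
    · have h1 : ¬ (i ≤ n) := by omega
      have h2 : ¬ (i + 1 ≤ n) := by omega
      simp only [h1, h2, if_neg]
      have h3 : i + 1 - n = (i - n) + 1 := by omega
      rw [h3]
      exact hws (i - n) (by omega)

def relSetoid (γ : ℝ) : Setoid X :=
  ⟨Rel γ, ⟨rel_refl γ, rel_symm, rel_trans⟩⟩

def chainLens (γ : ℝ) (p x : X) : Set ℝ :=
  {L | ∃ n, ∃ z : ℕ → X, z 0 = p ∧ z n = x ∧ (∀ i < n, dist (z i) (z (i+1)) ≤ γ)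
    ∧ L = ∑ i ∈ Finset.range n, dist (z i) (z (i+1))}

lemma chainLens_bddBelow {γ : ℝ} {p x : X} : BddBelow (chainLens γ p x) := by
  refine ⟨0, ?_⟩
  rintro L ⟨n, z, -, -, -, rfl⟩
  exact Finset.sum_nonneg fun i _ => dist_nonneg

lemma nonempty_of_rel {γ : ℝ} {p x : X} (h : Rel γ p x) : (chainLens γ p x).Nonempty := by
  obtain ⟨n, z, h0, hn, hs⟩ := h
  exact ⟨_, n, z, h0, hn, hs, rfl⟩

lemma chainLens_extend {γ L : ℝ} {p y x : X} (hL : L ∈ chainLens γ p y)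
    (hd : dist y x ≤ γ) : L + dist y x ∈ chainLens γ p x := by
  obtain ⟨n, z, h0, hn, hs, rfl⟩ := hL
  refine ⟨n+1, fun i => if i ≤ n then z i else x, by simp [h0], by simp, ?_, ?_⟩
  · intro i hi
    rcases Nat.lt_or_ge i n with h | h
    · have h1 : i ≤ n := h.le
      have h2 : i + 1 ≤ n := h
      simpa [h1, h2] using hs i h
    · have hin : i = n := by omega
      subst hin
      have h2 : ¬ (i + 1 ≤ i) := by omega
      simp only [le_refl, if_pos, h2, if_neg]
      rw [hn]
      exact hd
  · rw [Finset.sum_range_succ]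
    have h2 : ¬ (n + 1 ≤ n) := by omega
    have hlast : dist (if n ≤ n then z n else x) (if n + 1 ≤ n then z (n+1) else x)
        = dist y x := by
      simp only [le_refl, if_pos, h2, if_neg, hn]
      simp
    rw [hlast]
    congr 1
    apply Finset.sum_congr rfl
    intro i hi
    have hi' : i < n := Finset.mem_range.mp hi
    have h1 : i ≤ n := hi'.le
    have h3 : i + 1 ≤ n := hi'
    simp [h1, h3]

lemma sInf_lip {γ : ℝ} {p x y : X} (hne : (chainLens γ p y).Nonempty)
    (hd : dist y x ≤ γ) :
    sInf (chainLens γ p x) ≤ sInf (chainLens γ p y) + dist y x := by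
  have h1 : ∀ L ∈ chainLens γ p y, sInf (chainLens γ p x) - dist y x ≤ L := by
    intro L hL
    have h2 := csInf_le chainLens_bddBelow (chainLens_extend hL hd)
    linarith
  have h3 := le_csInf hne h1
  linarith

lemma mem_enlarge_of_chainLen {γ : ℝ} (hγ : 0 < γ) {p x : X} {L : ℝ}
    (hL : L ∈ chainLens γ p x) {m : ℕ} (hm : 2 * L ≤ γ * m) :
    x ∈ enlarge γ ({p} : Set X) (m + 1) := by
  obtain ⟨n, z, h0, hn, hs, rfl⟩ := hL
  subst hn; subst h0
  exact compress hγ n z hs m hm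

end BBProof

open BBProof

/-- A metric space `X` is Bourbaki-bounded (every uniformly continuous real
function is bounded) iff `X` is finitely chainable: for every `γ > 0` there
are finitely many points `x₁, …, x_{M₁}` and `M₂ ∈ ℕ` with
`X = {x₁, …, x_{M₁}}^{M₂, γ}`. -/
theorem bourbakiBounded_iff_finitely_chainable {X : Type*} [MetricSpace X] :
    (∀ f : X → ℝ, UniformContinuous f → ∃ C : ℝ, ∀ x : X, |f x| ≤ C) ↔
    (∀ γ : ℝ, 0 < γ → ∃ (M₁ M₂ : ℕ) (x : Fin M₁ → X),
      (Set.univ : Set X) = enlarge γ (Set.range x) M₂) := by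
  constructor
  · intro hB γ hγ
    by_contra hcon
    push_neg at hcon
    rcases isEmpty_or_nonempty X with hE | hNE
    · exact hcon 0 0 Fin.elim0 (by ext x; exact isEmptyElim x)
    classical
    letI s : Setoid X := relSetoid γ
    rcases finite_or_infinite (Quotient s) with hQ | hQ
    · -- finitely many chain components
      letI := Fintype.ofFinite (Quotient s)
      set M₁ := Fintype.card (Quotient s) with hM₁
      set p : Fin M₁ → X := fun i => ((Fintype.equivFin (Quotient s)).symm i).out with hp
      set f : X → ℝ := fun x => sInf (chainLens γ (Quotient.mk s x).out x) with hf
      have hrel : ∀ x : X, Rel γ (Quotient.mk s x).out x := by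
        intro x
        have h := Quotient.exact (Quotient.out_eq (Quotient.mk s x))
        exact h
      have hne : ∀ x : X, (chainLens γ (Quotient.mk s x).out x).Nonempty := fun x =>
        nonempty_of_rel (hrel x)
      have hlipf : ∀ x y : X, dist x y ≤ γ → |f x - f y| ≤ dist x y := by
        intro x y hxy
        have hmk : Quotient.mk s x = Quotient.mk s y := Quotient.sound (rel_of_dist_le hxy)
        have h1 : f x ≤ f y + dist y x := by
          rw [hf]
          simp only [hmk]
          exact sInf_lip (hne y) (by rwa [dist_comm])
        have h2 : f y ≤ f x + dist x y := by
          rw [hf]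
          simp only [← hmk]
          exact sInf_lip (hne x) hxy
        rw [abs_sub_le_iff]
        rw [dist_comm y x] at h1
        constructor <;> linarith
      have hUC : UniformContinuous f := by
        rw [Metric.uniformContinuous_iff]
        intro ε hε
        refine ⟨min γ ε, lt_min hγ hε, ?_⟩
        intro a b hab
        have h1 : dist a b ≤ γ := le_of_lt (lt_of_lt_of_le hab (min_le_left _ _))
        have h2 := hlipf a b h1
        rw [Real.dist_eq]
        exact lt_of_le_of_lt h2 (lt_of_lt_of_le hab (min_le_right _ _))
      obtain ⟨C, hC⟩ := hB f hUC
      set m := ⌈2 * (C+1) / γ⌉₊ with hm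
      obtain ⟨xb, hxb⟩ := (Set.ne_univ_iff_exists_notMem _).mp (Ne.symm (hcon M₁ (m+1) p))
      have hfxb : f xb ≤ C := le_trans (le_abs_self _) (hC xb)
      have hlt : sInf (chainLens γ (Quotient.mk s xb).out xb) < C + 1 :=
        lt_of_le_of_lt hfxb (by linarith)
      obtain ⟨L, hLmem, hLlt⟩ := exists_lt_of_csInf_lt (hne xb) hlt
      have h2L : 2 * L ≤ γ * m := by
        have h1 : 2*(C+1)/γ ≤ (m:ℝ) := Nat.le_ceil _
        rw [div_le_iff₀ hγ] at h1
        nlinarith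
      have hmem := mem_enlarge_of_chainLen hγ hLmem h2L
      have hpR : (Quotient.mk s xb).out ∈ Set.range p := by
        refine ⟨Fintype.equivFin (Quotient s) (Quotient.mk s xb), ?_⟩
        rw [hp]
        simp
      exact hxb (enlarge_mono_set (Set.singleton_subset_iff.mpr hpR) _ hmem)
    · -- infinitely many chain components
      set e := Infinite.natEmbedding (Quotient s) with he
      set f : X → ℝ := fun x => if h : ∃ n, e n = Quotient.mk s x then (h.choose : ℝ) else 0
        with hf
      have hconst : ∀ a b : X, dist a b ≤ γ → f a = f b := by
        intro a b hab
        have hmk : Quotient.mk s a = Quotient.mk s b := Quotient.sound (rel_of_dist_le hab)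
        rw [hf]
        simp only [hmk]
      have hUC : UniformContinuous f := by
        rw [Metric.uniformContinuous_iff]
        intro ε hε
        refine ⟨γ, hγ, ?_⟩
        intro a b hab
        rw [Real.dist_eq, hconst a b hab.le]
        simpa using hε
      obtain ⟨C, hC⟩ := hB f hUC
      set n := ⌈C⌉₊ + 1 with hn
      have hval : f (e n).out = n := by
        have hmk : Quotient.mk s (e n).out = e n := Quotient.out_eq _
        have hex : ∃ m, e m = Quotient.mk s (e n).out := ⟨n, hmk.symm⟩
        have hch : hex.choose = n := e.injective (hex.choose_spec.trans hmk)
        rw [hf]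
        simp only [dif_pos hex, hch]
      have h1 := hC (e n).out
      rw [hval] at h1
      have h2 : (n:ℝ) ≤ C := le_trans (le_abs_self _) h1
      have h3 : C < (n:ℝ) := by
        have h4 := Nat.le_ceil C
        rw [hn]
        push_cast
        linarith
      linarith
  · intro hFC f hfUC
    obtain ⟨δ, hδ, hδ1⟩ := Metric.uniformContinuous_iff.mp hfUC 1 one_pos
    obtain ⟨M₁, M₂, x, hx⟩ := hFC (δ/2) (by linarith)
    set B := ∑ i : Fin M₁, |f (x i)| with hB
    have hBi : ∀ i, |f (x i)| ≤ B := fun i =>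
      Finset.single_le_sum (f := fun i => |f (x i)|) (fun j _ => abs_nonneg _)
        (Finset.mem_univ i)
    have key : ∀ k, ∀ z ∈ enlarge (δ/2) (Set.range x) k, |f z| ≤ B + k := by
      intro k
      induction k with
      | zero => rintro z ⟨i, rfl⟩; simpa using hBi i
      | succ k IH =>
        intro z hz
        rw [BBProof.mem_enlarge_succ] at hz
        have hlt : EMetric.infEdist z (enlarge (δ/2) (Set.range x) k) < ENNReal.ofReal δ :=
          lt_of_le_of_lt hz (by rw [ENNReal.ofReal_lt_ofReal_iff hδ]; linarith)
        obtain ⟨y, hy, hdy⟩ := EMetric.infEdist_lt_iff.mp hlt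
        have hdy' : dist z y < δ := by rwa [edist_lt_ofReal] at hdy
        have h1 := hδ1 hdy'
        rw [Real.dist_eq] at h1
        have h2 := IH y hy
        have h3 : |f z| - |f y| ≤ |f z - f y| := abs_sub_abs_le_abs_sub _ _
        push_cast
        linarith
    refine ⟨B + M₂, fun z => key M₂ z ?_⟩
    rw [← hx]
    trivial
end

section
/- Let (X,d) be a metric space and A ⊆ X. Then A is a Bourbaki-bounded subset of X (every uniformly continuous real-valued function on X is bounded on A) if and only if A is bounded with respect to every metric d' on X that is uniformly equivalent to d (i.e., such that the identity maps (X,d) → (X,d') and (X,d') → (X,d) are both uniformly continuous). -/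
/-- `A ⊆ X` is a Bourbaki-bounded subset of `(X, d)` (every uniformly
continuous real function on `X` is bounded on `A`) iff `A` has finite
diameter with respect to every metric `d'` on `X` uniformly equivalent to `d`
(i.e. the identity map is uniformly continuous in both directions). -/
theorem bourbakiBoundedSubset_iff_bounded_uniformly_equivalent
    {X : Type*} [m : MetricSpace X] (A : Set X) :
    (∀ f : X → ℝ, UniformContinuous f → ∃ C : ℝ, ∀ x ∈ A, |f x| ≤ C) ↔
    (∀ m' : MetricSpace X,
      @UniformContinuous X X m.toUniformSpace m'.toUniformSpace id →
      @UniformContinuous X X m'.toUniformSpace m.toUniformSpace id →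
      ∃ C : ℝ, ∀ x ∈ A, ∀ y ∈ A, @dist X m'.toDist x y ≤ C) := by
  constructor
  · intro h m' h1 _h2
    rcases A.eq_empty_or_nonempty with rfl | ⟨a, ha⟩
    · exact ⟨0, by simp⟩
    · -- f x = d'(a, x) is uniformly continuous on (X, d)
      have hfa : @UniformContinuous X ℝ m'.toUniformSpace _
          (fun x => @dist X m'.toDist a x) :=
        @UniformContinuous.dist X X m'.toPseudoMetricSpace m'.toUniformSpace _ _
          (@uniformContinuous_const X X m'.toUniformSpace m'.toUniformSpace a)
          (@uniformContinuous_id X m'.toUniformSpace)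
      have hf : @UniformContinuous X ℝ m.toUniformSpace _
          (fun x => @dist X m'.toDist a x) :=
        @UniformContinuous.comp X X ℝ m.toUniformSpace m'.toUniformSpace _ _ _ hfa h1
      obtain ⟨C, hC⟩ := h _ hf
      refine ⟨2 * C, fun x hx y hy => ?_⟩
      have hx' : @dist X m'.toDist a x ≤ C := le_trans (le_abs_self _) (hC x hx)
      have hy' : @dist X m'.toDist a y ≤ C := le_trans (le_abs_self _) (hC y hy)
      calc @dist X m'.toDist x y
          ≤ @dist X m'.toDist x a + @dist X m'.toDist a y := @dist_triangle X m'.toPseudoMetricSpace x a y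
        _ ≤ C + C := by rw [@dist_comm X m'.toPseudoMetricSpace x a]; linarith
        _ = 2 * C := by ring
  · intro h f hf
    -- build metric d'(x,y) = max (d x y) |f x - f y| via embedding x ↦ (x, f x)
    set g : X → X × ℝ := fun x => (x, f x) with hg
    have hginj : Function.Injective g := fun a b hab => congrArg Prod.fst hab
    have hgUC : @UniformContinuous X (X × ℝ) m.toUniformSpace _ g :=
      @UniformContinuous.prodMk X X ℝ m.toUniformSpace m.toUniformSpace _ id f
        uniformContinuous_id hf
    have hgd : ∀ x y : X, @dist X (MetricSpace.induced g hginj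
        (inferInstance : MetricSpace (X × ℝ))).toDist x y = dist (g x) (g y) :=
      fun _ _ => rfl
    have h1 : @UniformContinuous X X m.toUniformSpace
        (MetricSpace.induced g hginj (inferInstance : MetricSpace (X × ℝ))).toUniformSpace id :=
      uniformContinuous_comap' (f := g) (g := id)
        (v := @instUniformSpaceProd X ℝ m.toUniformSpace inferInstance)
        (u := m.toUniformSpace) hgUC
    have h2 : @UniformContinuous X X
        (MetricSpace.induced g hginj (inferInstance : MetricSpace (X × ℝ))).toUniformSpace
        m.toUniformSpace id :=
      @UniformContinuous.comp X (X × ℝ) X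
        (MetricSpace.induced g hginj (inferInstance : MetricSpace (X × ℝ))).toUniformSpace
        (@instUniformSpaceProd X ℝ m.toUniformSpace inferInstance)
        m.toUniformSpace (fun p => p.1) g
        (@uniformContinuous_fst X ℝ m.toUniformSpace inferInstance)
        (uniformContinuous_comap (f := g))
    obtain ⟨C, hC⟩ := h (MetricSpace.induced g hginj inferInstance) h1 h2
    rcases A.eq_empty_or_nonempty with rfl | ⟨a, ha⟩
    · exact ⟨0, by simp⟩
    · refine ⟨C + |f a|, fun x hx => ?_⟩
      have hCx := hC x hx a ha
      rw [hgd, Prod.dist_eq] at hCx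
      have h3 : dist (f x) (f a) ≤ C := le_trans (le_max_right _ _) hCx
      rw [Real.dist_eq] at h3
      calc |f x| = |(f x - f a) + f a| := by ring_nf
        _ ≤ |f x - f a| + |f a| := abs_add_le _ _
        _ ≤ C + |f a| := by linarith
end

section
/- Let (X,d) be a metric space and A ⊆ X. Then A is a Bourbaki-bounded subset of X (every uniformly continuous real-valued function on X is bounded on A) if and only if every countable subset B ⊆ A is a Bourbaki-bounded subset of X. -/
/-- `A ⊆ X` is a Bourbaki-bounded subset of `X` iff every countable subset of
`A` is a Bourbaki-bounded subset of `X`. -/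
theorem bourbakiBoundedSubset_iff_countable_subsets {X : Type*} [MetricSpace X] (A : Set X) :
    IsBourbakiBoundedSubset A ↔
    (∀ B ⊆ A, B.Countable → IsBourbakiBoundedSubset B) := by
  constructor
  · intro h B hBA _ f hf
    obtain ⟨C, hC⟩ := h f hf
    exact ⟨C, fun x hx => hC x (hBA hx)⟩
  · intro h f hf
    by_contra hc
    push_neg at hc
    choose x hxA hx using fun n : ℕ => hc n
    obtain ⟨C, hC⟩ := h (Set.range x) (Set.range_subset_iff.2 hxA)
      (Set.countable_range x) f hf
    obtain ⟨n, hn⟩ := exists_nat_gt C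
    exact absurd (hC (x n) (Set.mem_range_self n)) (by
      have := hx n
      linarith)
end
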